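/- arXiv:1605.05076 — 7 statements merged into one kernel-verified Lean document; each statement's English description precedes it below -/
import Mathlib

section
/- (Beltrami formula in H₃, Theorem 2.2.1 / identity (2.10)) For every smooth function f : D → ℝ the following identity holds on D: P_x + Q_y + Q²·P_x + P²·Q_y − P·Q − 2P·Q·Q_x = W·(E·N − 2F·M + G·L); equivalently, 2H = (1/W³)(P_x + Q_y + Q²P_x + P²Q_y − PQ − 2PQ·Q_x). (This is the scalar form of the Beltrami formula Δr = 2H for graph surfaces in the Heisenberg group H₃.) -/
noncomputable section

/-- Partial derivative with respect to the first (x) variable. -/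
def pdx (f : ℝ × ℝ → ℝ) : ℝ × ℝ → ℝ := fun p => fderiv ℝ f p (1, 0)

/-- Partial derivative with respect to the second (y) variable. -/
def pdy (f : ℝ × ℝ → ℝ) : ℝ × ℝ → ℝ := fun p => fderiv ℝ f p (0, 1)

/-- `P = f_x + y/2`. -/
def Pf (f : ℝ × ℝ → ℝ) : ℝ × ℝ → ℝ := fun p => pdx f p + p.2 / 2

/-- `Q = f_y - x/2`. -/
def Qf (f : ℝ × ℝ → ℝ) : ℝ × ℝ → ℝ := fun p => pdy f p - p.1 / 2

/-- First fundamental form coefficient `E = 1 + P²`. -/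
def Ef (f : ℝ × ℝ → ℝ) : ℝ × ℝ → ℝ := fun p => 1 + Pf f p ^ 2

/-- First fundamental form coefficient `F = P·Q`. -/
def Ff (f : ℝ × ℝ → ℝ) : ℝ × ℝ → ℝ := fun p => Pf f p * Qf f p

/-- First fundamental form coefficient `G = 1 + Q²`. -/
def Gf (f : ℝ × ℝ → ℝ) : ℝ × ℝ → ℝ := fun p => 1 + Qf f p ^ 2

/-- `W = √(EG − F²) = √(1 + P² + Q²)`. -/
def Wf (f : ℝ × ℝ → ℝ) : ℝ × ℝ → ℝ := fun p => Real.sqrt (1 + Pf f p ^ 2 + Qf f p ^ 2)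

/-- Second fundamental form coefficient `L = (f_xx + PQ)/W`. -/
def Lf (f : ℝ × ℝ → ℝ) : ℝ × ℝ → ℝ := fun p => (pdx (pdx f) p + Pf f p * Qf f p) / Wf f p

/-- Second fundamental form coefficient `M = (f_xy + (Q² − P²)/2)/W`. -/
def Mf (f : ℝ × ℝ → ℝ) : ℝ × ℝ → ℝ :=
  fun p => (pdx (pdy f) p + (Qf f p ^ 2 - Pf f p ^ 2) / 2) / Wf f p

/-- Second fundamental form coefficient `N = (f_yy − PQ)/W`. -/
def Nf (f : ℝ × ℝ → ℝ) : ℝ × ℝ → ℝ := fun p => (pdy (pdy f) p - Pf f p * Qf f p) / Wf f p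

/-- Mean curvature `H = (EN − 2FM + GL)/(2W²)`. -/
def Hf (f : ℝ × ℝ → ℝ) : ℝ × ℝ → ℝ :=
  fun p => (Ef f p * Nf f p - 2 * Ff f p * Mf f p + Gf f p * Lf f p) / (2 * Wf f p ^ 2)

/-- The Laplace–Beltrami operator of the graph of `f`, with the sign convention
`Δφ = −(1/W)[∂_x((G φ_x − F φ_y)/W) + ∂_y((−F φ_x + E φ_y)/W)]`. -/
def lapS (f φ : ℝ × ℝ → ℝ) : ℝ × ℝ → ℝ := fun p =>
  -(1 / Wf f p) *
    (pdx (fun q => (Gf f q * pdx φ q - Ff f q * pdy φ q) / Wf f q) p +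
     pdy (fun q => (-(Ff f q) * pdx φ q + Ef f q * pdy φ q) / Wf f q) p)

/-- Mean curvature in the form `H = (f_xx + f_yy)/(2W³)`. -/
def Hm (f : ℝ × ℝ → ℝ) : ℝ × ℝ → ℝ :=
  fun p => (pdx (pdx f) p + pdy (pdy f) p) / (2 * Wf f p ^ 3)

/-- `H₁ = (f_xx + f_yy)/W`. -/
def H1f (f : ℝ × ℝ → ℝ) : ℝ × ℝ → ℝ :=
  fun p => (pdx (pdx f) p + pdy (pdy f) p) / Wf f p

/-- **Beltrami formula in `H₃`** (Theorem 2.2.1 / identity (2.10)): for every smooth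
`f : D → ℝ`, on `D` one has
`P_x + Q_y + Q²P_x + P²Q_y − PQ − 2PQQ_x = W(EN − 2FM + GL)`, equivalently
`2H = (1/W³)(P_x + Q_y + Q²P_x + P²Q_y − PQ − 2PQQ_x)`. -/
theorem beltrami_formula_heisenberg
    (D : Set (ℝ × ℝ)) (hD : IsOpen D) (hDne : D.Nonempty)
    (f : ℝ × ℝ → ℝ) (hf : ContDiffOn ℝ (⊤ : ℕ∞) f D) :
    ∀ p ∈ D,
      (pdx (Pf f) p + pdy (Qf f) p + Qf f p ^ 2 * pdx (Pf f) p +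
          Pf f p ^ 2 * pdy (Qf f) p - Pf f p * Qf f p -
          2 * Pf f p * Qf f p * pdx (Qf f) p =
        Wf f p * (Ef f p * Nf f p - 2 * Ff f p * Mf f p + Gf f p * Lf f p)) ∧
      (2 * Hf f p =
        (1 / Wf f p ^ 3) *
          (pdx (Pf f) p + pdy (Qf f) p + Qf f p ^ 2 * pdx (Pf f) p +
            Pf f p ^ 2 * pdy (Qf f) p - Pf f p * Qf f p -
            2 * Pf f p * Qf f p * pdx (Qf f) p)) := by

  intro p hp
  have hfp : ContDiffAt ℝ (⊤ : ℕ∞) f p := hf.contDiffAt (hD.mem_nhds hp)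
  have hd1 : ContDiffAt ℝ (⊤ : ℕ∞) (fderiv ℝ f) p := hfp.fderiv_right (by exact_mod_cast le_top)
  have hdx : ContDiffAt ℝ (⊤ : ℕ∞) (pdx f) p := hd1.clm_apply contDiffAt_const
  have hdy : ContDiffAt ℝ (⊤ : ℕ∞) (pdy f) p := hd1.clm_apply contDiffAt_const
  have hdxd : DifferentiableAt ℝ (pdx f) p := hdx.differentiableAt (by simp)
  have hdyd : DifferentiableAt ℝ (pdy f) p := hdy.differentiableAt (by simp)
  have hsnd : DifferentiableAt ℝ (fun q : ℝ × ℝ => q.2 / 2) p :=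
    by fun_prop
  have hfst : DifferentiableAt ℝ (fun q : ℝ × ℝ => q.1 / 2) p :=
    by fun_prop
  have hsndF : fderiv ℝ (fun q : ℝ × ℝ => q.2 / 2) p
      = (2:ℝ)⁻¹ • ContinuousLinearMap.snd ℝ ℝ ℝ := by
    have : HasFDerivAt (fun q : ℝ × ℝ => q.2 / 2)
        ((2:ℝ)⁻¹ • ContinuousLinearMap.snd ℝ ℝ ℝ) p := by
      simpa [div_eq_inv_mul] using
        (hasFDerivAt_snd (p := p) (E := ℝ) (F := ℝ)).const_mul ((2:ℝ)⁻¹)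
    exact this.fderiv
  have hfstF : fderiv ℝ (fun q : ℝ × ℝ => q.1 / 2) p
      = (2:ℝ)⁻¹ • ContinuousLinearMap.fst ℝ ℝ ℝ := by
    have : HasFDerivAt (fun q : ℝ × ℝ => q.1 / 2)
        ((2:ℝ)⁻¹ • ContinuousLinearMap.fst ℝ ℝ ℝ) p := by
      simpa [div_eq_inv_mul] using
        (hasFDerivAt_fst (p := p) (E := ℝ) (F := ℝ)).const_mul ((2:ℝ)⁻¹)
    exact this.fderiv
  have hsnd10 : fderiv ℝ (fun q : ℝ × ℝ => q.2 / 2) p (1, 0) = 0 := by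
    rw [hsndF]; simp
  have hsnd01 : fderiv ℝ (fun q : ℝ × ℝ => q.2 / 2) p (0, 1) = 1 / 2 := by
    rw [hsndF]; norm_num
  have hfst10 : fderiv ℝ (fun q : ℝ × ℝ => q.1 / 2) p (1, 0) = 1 / 2 := by
    rw [hfstF]; norm_num
  have hfst01 : fderiv ℝ (fun q : ℝ × ℝ => q.1 / 2) p (0, 1) = 0 := by
    rw [hfstF]; simp
  have hP : pdx (Pf f) p = pdx (pdx f) p := by
    show fderiv ℝ (fun q => pdx f q + q.2 / 2) p (1, 0) = _
    rw [fderiv_fun_add hdxd hsnd]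
    simp [hsnd10, pdx]
  have hQy : pdy (Qf f) p = pdy (pdy f) p := by
    show fderiv ℝ (fun q => pdy f q - q.1 / 2) p (0, 1) = _
    rw [fderiv_fun_sub hdyd hfst]
    simp [hfst01, pdy]
  have hQx : pdx (Qf f) p = pdx (pdy f) p - 1 / 2 := by
    show fderiv ℝ (fun q => pdy f q - q.1 / 2) p (1, 0) = _
    rw [fderiv_fun_sub hdyd hfst]
    simp [hfst10, pdx]
  have hWpos : 0 < Wf f p := Real.sqrt_pos.mpr (by positivity)
  have hW2 : Wf f p ^ 2 = 1 + Pf f p ^ 2 + Qf f p ^ 2 := Real.sq_sqrt (by positivity)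
  have hWne : Wf f p ≠ 0 := ne_of_gt hWpos
  have h1 : pdx (Pf f) p + pdy (Qf f) p + Qf f p ^ 2 * pdx (Pf f) p +
      Pf f p ^ 2 * pdy (Qf f) p - Pf f p * Qf f p -
      2 * Pf f p * Qf f p * pdx (Qf f) p =
      Wf f p * (Ef f p * Nf f p - 2 * Ff f p * Mf f p + Gf f p * Lf f p) := by
    rw [hP, hQy, hQx]
    simp only [Ef, Ff, Gf, Lf, Mf, Nf]
    field_simp
    ring
  refine ⟨h1, ?_⟩
  have h2 : Ef f p * Nf f p - 2 * Ff f p * Mf f p + Gf f p * Lf f p =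
      (pdx (Pf f) p + pdy (Qf f) p + Qf f p ^ 2 * pdx (Pf f) p +
        Pf f p ^ 2 * pdy (Qf f) p - Pf f p * Qf f p -
        2 * Pf f p * Qf f p * pdx (Qf f) p) / Wf f p := by
    rw [eq_div_iff hWne]
    linarith [h1]
  simp only [Hf]
  rw [h2]
  field_simp
end
end

section
/- (Mean curvature of ruled graphs, identity (2.8)) Under the ruled hypothesis Q = −uP, u_y + u·u_x = 0, one has W·(E·N − 2F·M + G·L) = f_xx + f_yy on D; equivalently the mean curvature of the graph of f is H = (f_xx + f_yy)/(2W³). -/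
noncomputable section

/-- **Mean curvature of ruled graphs** (identity (2.8)): under the ruled hypothesis
`Q = −uP`, `u_y + u·u_x = 0`, one has `W(EN − 2FM + GL) = f_xx + f_yy` on `D`; equivalently
the mean curvature of the graph of `f` is `H = (f_xx + f_yy)/(2W³)`. -/
theorem mean_curvature_ruled_graph_heisenberg
    (D : Set (ℝ × ℝ)) (hD : IsOpen D) (hDne : D.Nonempty)
    (f : ℝ × ℝ → ℝ) (hf : ContDiffOn ℝ (⊤ : ℕ∞) f D)
    (u : ℝ × ℝ → ℝ) (hu : ContDiffOn ℝ (⊤ : ℕ∞) u D)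
    (hruled : ∀ p ∈ D, Qf f p = -(u p) * Pf f p)
    (hburgers : ∀ p ∈ D, pdy u p + u p * pdx u p = 0) :
    ∀ p ∈ D,
      (Wf f p * (Ef f p * Nf f p - 2 * Ff f p * Mf f p + Gf f p * Lf f p) =
        pdx (pdx f) p + pdy (pdy f) p) ∧
      (Hf f p = (pdx (pdx f) p + pdy (pdy f) p) / (2 * Wf f p ^ 3)) := by
  intro p hp
  have hmem := hD.mem_nhds hp
  have hfp : ContDiffAt ℝ (⊤ : ℕ∞) f p := hf.contDiffAt hmem
  have hup : ContDiffAt ℝ (⊤ : ℕ∞) u p := hu.contDiffAt hmem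
  have hdf : ContDiffAt ℝ (⊤ : ℕ∞) (fderiv ℝ f) p := hfp.fderiv_right (by simp)
  have hdiff2 : DifferentiableAt ℝ (fderiv ℝ f) p := hdf.differentiableAt (by simp)
  set B2 := fderiv ℝ (fderiv ℝ f) p with hB2
  have hx : HasFDerivAt (pdx f)
      ((ContinuousLinearMap.apply ℝ ℝ ((1:ℝ),(0:ℝ))).comp B2) p :=
    (ContinuousLinearMap.apply ℝ ℝ ((1:ℝ),(0:ℝ))).hasFDerivAt.comp p hdiff2.hasFDerivAt
  have hy : HasFDerivAt (pdy f)
      ((ContinuousLinearMap.apply ℝ ℝ ((0:ℝ),(1:ℝ))).comp B2) p :=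
    (ContinuousLinearMap.apply ℝ ℝ ((0:ℝ),(1:ℝ))).hasFDerivAt.comp p hdiff2.hasFDerivAt
  have hsymm := hfp.isSymmSndFDerivAt (by
    rw [show ((2:WithTop ℕ∞)) = (((2:ℕ∞)):WithTop ℕ∞) by rfl]
    rw [minSmoothness_of_isRCLikeNormedField]
    exact WithTop.coe_le_coe.mpr (le_top : (2:ℕ∞) ≤ ⊤))
  have hBsym : B2 (1,0) (0,1) = B2 (0,1) (1,0) := hsymm (1,0) (0,1)
  have hsnd : HasFDerivAt (fun q : ℝ × ℝ => q.2 / 2)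
      ((2:ℝ)⁻¹ • ContinuousLinearMap.snd ℝ ℝ ℝ) p := by
    simpa [div_eq_inv_mul, Pi.smul_def, smul_eq_mul] using
      ((2:ℝ)⁻¹ • ContinuousLinearMap.snd ℝ ℝ ℝ).hasFDerivAt (x := p)
  have hfst : HasFDerivAt (fun q : ℝ × ℝ => q.1 / 2)
      ((2:ℝ)⁻¹ • ContinuousLinearMap.fst ℝ ℝ ℝ) p := by
    simpa [div_eq_inv_mul, Pi.smul_def, smul_eq_mul] using
      ((2:ℝ)⁻¹ • ContinuousLinearMap.fst ℝ ℝ ℝ).hasFDerivAt (x := p)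
  have hP : HasFDerivAt (Pf f)
      (((ContinuousLinearMap.apply ℝ ℝ ((1:ℝ),(0:ℝ))).comp B2)
        + (2:ℝ)⁻¹ • ContinuousLinearMap.snd ℝ ℝ ℝ) p := hx.add hsnd
  have hQ : HasFDerivAt (Qf f)
      (((ContinuousLinearMap.apply ℝ ℝ ((0:ℝ),(1:ℝ))).comp B2)
        - (2:ℝ)⁻¹ • ContinuousLinearMap.fst ℝ ℝ ℝ) p := hy.sub hfst
  have hu' : HasFDerivAt u (fderiv ℝ u p) p :=
    (hup.differentiableAt (by simp)).hasFDerivAt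
  have hG : HasFDerivAt (fun q => -(u q) * Pf f q)
      ((-(u p)) • (((ContinuousLinearMap.apply ℝ ℝ ((1:ℝ),(0:ℝ))).comp B2)
        + (2:ℝ)⁻¹ • ContinuousLinearMap.snd ℝ ℝ ℝ)
        + Pf f p • (-(fderiv ℝ u p))) p := hu'.neg.mul hP
  have hEq : fderiv ℝ (Qf f) p = fderiv ℝ (fun q => -(u q) * Pf f q) p :=
    Filter.EventuallyEq.fderiv_eq (Filter.eventuallyEq_of_mem hmem hruled)
  have hkey : (((ContinuousLinearMap.apply ℝ ℝ ((0:ℝ),(1:ℝ))).comp B2)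
        - (2:ℝ)⁻¹ • ContinuousLinearMap.fst ℝ ℝ ℝ)
      = ((-(u p)) • (((ContinuousLinearMap.apply ℝ ℝ ((1:ℝ),(0:ℝ))).comp B2)
        + (2:ℝ)⁻¹ • ContinuousLinearMap.snd ℝ ℝ ℝ)
        + Pf f p • (-(fderiv ℝ u p))) := by
    rw [← hQ.fderiv, ← hG.fderiv]; exact hEq
  -- scalar names
  set Av := B2 (1,0) (1,0) with hAv
  set Bv := B2 (1,0) (0,1) with hBv
  set Cv := B2 (0,1) (0,1) with hCv
  set Pv := Pf f p with hPv
  set Qv := Qf f p with hQv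
  set uu := u p with huu
  set ux := fderiv ℝ u p (1,0) with hux
  set uy := fderiv ℝ u p (0,1) with huy
  have e1 : Bv - (2:ℝ)⁻¹ = -uu * Av - Pv * ux := by
    have := DFunLike.congr_fun hkey ((1:ℝ),(0:ℝ))
    simp at this
    linarith
  have e2 : Cv = -uu * (Bv + (2:ℝ)⁻¹) - Pv * uy := by
    have := DFunLike.congr_fun hkey ((0:ℝ),(1:ℝ))
    simp at this
    rw [← hCv, ← hBsym, ← huy] at this
    linarith
  have hQP : Qv = -uu * Pv := hruled p hp
  have hbu : uy + uu * ux = 0 := by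
    have := hburgers p hp
    simpa [pdx, pdy, ← hux, ← huy, ← huu] using this
  have hzero : Pv^2*Cv + Qv^2*Av - 2*Pv*Qv*Bv = 0 := by
    linear_combination (Pv^2) * e2 + (Av*(Qv - uu*Pv) - 2*Pv*Bv) * hQP
      - Pv^3*hbu + Pv^2*uu*e1
  -- identify the second partials appearing in the goal
  have hA : pdx (pdx f) p = Av := by
    show fderiv ℝ (pdx f) p (1,0) = Av
    rw [hx.fderiv]; rfl
  have hB : pdx (pdy f) p = Bv := by
    show fderiv ℝ (pdy f) p (1,0) = Bv
    rw [hy.fderiv]; rfl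
  have hC : pdy (pdy f) p = Cv := by
    show fderiv ℝ (pdy f) p (0,1) = Cv
    rw [hy.fderiv]; rfl
  -- W facts
  have hWsq : Wf f p ^ 2 = 1 + Pv^2 + Qv^2 := by
    show Real.sqrt (1 + Pf f p ^ 2 + Qf f p ^ 2) ^ 2 = _
    rw [Real.sq_sqrt (by positivity)]
  have hWpos : 0 < Wf f p := Real.sqrt_pos.mpr (by positivity)
  set W := Wf f p with hWdef
  have hg1 : W * (Ef f p * Nf f p - 2 * Ff f p * Mf f p + Gf f p * Lf f p)
      = pdx (pdx f) p + pdy (pdy f) p := by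
    rw [Ef, Ff, Gf, Lf, Mf, Nf, hA, hB, hC, ← hPv, ← hQv, ← hWdef]
    field_simp
    linear_combination hzero
  refine ⟨hg1, ?_⟩
  have hX : Ef f p * Nf f p - 2 * Ff f p * Mf f p + Gf f p * Lf f p
      = (pdx (pdx f) p + pdy (pdy f) p) / W := by
    rw [eq_div_iff hWpos.ne']
    linear_combination hg1
  simp only [Hf]
  rw [hX, ← hWdef, hA, hC, div_div, show W * (2*W^2) = 2*W^3 by ring]
end
end

section
/- (Minimal ruled graphs are graphs of harmonic functions) Under the ruled hypothesis Q = −uP, u_y + u·u_x = 0, the graph of f is a minimal surface of H₃ (H ≡ 0 on D) if and only if f is harmonic, i.e. f_xx + f_yy = 0 on D. -/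
noncomputable section

lemma top_add_one_le : ((⊤:ℕ∞) : WithTop ℕ∞) + 1 ≤ ((⊤:ℕ∞) : WithTop ℕ∞) := by simp

lemma two_le_top : (2 : WithTop ℕ∞) ≤ ((⊤:ℕ∞) : WithTop ℕ∞) := by
  rw [show ((2:WithTop ℕ∞)) = ((2:ℕ∞):WithTop ℕ∞) by rfl]
  exact WithTop.coe_le_coe.2 le_top

lemma contDiffAt_pd {f : ℝ×ℝ → ℝ} {p : ℝ×ℝ} (hf : ContDiffAt ℝ (⊤:ℕ∞) f p) (v : ℝ×ℝ) :
    ContDiffAt ℝ (⊤:ℕ∞) (fun q => fderiv ℝ f q v) p :=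
  (hf.fderiv_right (m := (⊤:ℕ∞)) top_add_one_le).clm_apply contDiffAt_const

lemma diffAt_pd {f : ℝ×ℝ → ℝ} {p : ℝ×ℝ} (hf : ContDiffAt ℝ (⊤:ℕ∞) f p) (v : ℝ×ℝ) :
    DifferentiableAt ℝ (fun q => fderiv ℝ f q v) p :=
  (contDiffAt_pd hf v).differentiableAt (by simp)

lemma pd_symm {f : ℝ×ℝ → ℝ} {p : ℝ×ℝ} (hf : ContDiffAt ℝ (⊤:ℕ∞) f p) (v w : ℝ×ℝ) :
    fderiv ℝ (fun q => fderiv ℝ f q v) p w = fderiv ℝ (fun q => fderiv ℝ f q w) p v := by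
  have hd : DifferentiableAt ℝ (fderiv ℝ f) p :=
    (hf.fderiv_right (m := (⊤:ℕ∞)) top_add_one_le).differentiableAt (by simp)
  rw [fderiv_clm_apply hd (differentiableAt_const v), fderiv_clm_apply hd (differentiableAt_const w)]
  simp
  exact (hf.isSymmSndFDerivAt (by rw [minSmoothness_of_isRCLikeNormedField]; exact two_le_top)).eq w v

lemma fd_fst_half (p v : ℝ×ℝ) : fderiv ℝ (fun q : ℝ×ℝ => q.1/2) p v = v.1/2 := by
  have : HasFDerivAt (fun q : ℝ×ℝ => q.1/2) ((1/2 : ℝ) • ContinuousLinearMap.fst ℝ ℝ ℝ) p := by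
    simpa [div_eq_inv_mul, smul_smul, Pi.smul_def] using (hasFDerivAt_fst (𝕜 := ℝ) (p := p)).const_smul (1/2:ℝ)
  rw [this.fderiv]; simp; ring

lemma fd_snd_half (p v : ℝ×ℝ) : fderiv ℝ (fun q : ℝ×ℝ => q.2/2) p v = v.2/2 := by
  have : HasFDerivAt (fun q : ℝ×ℝ => q.2/2) ((1/2 : ℝ) • ContinuousLinearMap.snd ℝ ℝ ℝ) p := by
    simpa [div_eq_inv_mul, smul_smul, Pi.smul_def] using (hasFDerivAt_snd (𝕜 := ℝ) (p := p)).const_smul (1/2:ℝ)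
  rw [this.fderiv]; simp; ring

lemma diffAt_fst_half (p : ℝ×ℝ) : DifferentiableAt ℝ (fun q : ℝ×ℝ => q.1/2) p := by fun_prop

lemma diffAt_snd_half (p : ℝ×ℝ) : DifferentiableAt ℝ (fun q : ℝ×ℝ => q.2/2) p := by fun_prop

lemma fd_sub_fst {g : ℝ×ℝ → ℝ} {p : ℝ×ℝ} (hg : DifferentiableAt ℝ g p) (v : ℝ×ℝ) :
    fderiv ℝ (fun q => g q - q.1/2) p v = fderiv ℝ g p v - v.1/2 := by
  rw [fderiv_fun_sub hg (diffAt_fst_half p)]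
  simp [fd_fst_half]

lemma fd_add_snd {g : ℝ×ℝ → ℝ} {p : ℝ×ℝ} (hg : DifferentiableAt ℝ g p) (v : ℝ×ℝ) :
    fderiv ℝ (fun q => g q + q.2/2) p v = fderiv ℝ g p v + v.2/2 := by
  rw [fderiv_fun_add hg (diffAt_snd_half p)]
  simp [fd_snd_half]

lemma fd_neg_mul {u g : ℝ×ℝ → ℝ} {p : ℝ×ℝ} (hu : DifferentiableAt ℝ u p)
    (hg : DifferentiableAt ℝ g p) (v : ℝ×ℝ) :
    fderiv ℝ (fun q => -(u q) * g q) p v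
      = -(fderiv ℝ u p v) * g p + -(u p) * fderiv ℝ g p v := by
  rw [fderiv_fun_mul (show DifferentiableAt ℝ (fun q => -(u q)) p from hu.neg) hg, fderiv_fun_neg]
  simp
  ring

/-- **Minimal ruled graphs are graphs of harmonic functions**: under the ruled hypothesis
`Q = −uP`, `u_y + u·u_x = 0`, the graph of `f` is a minimal surface of `H₃` (`H ≡ 0` on `D`)
if and only if `f` is harmonic, i.e. `f_xx + f_yy = 0` on `D`. -/
theorem minimal_ruled_graph_iff_harmonic
    (D : Set (ℝ × ℝ)) (hD : IsOpen D) (hDne : D.Nonempty)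
    (f : ℝ × ℝ → ℝ) (hf : ContDiffOn ℝ (⊤ : ℕ∞) f D)
    (u : ℝ × ℝ → ℝ) (hu : ContDiffOn ℝ (⊤ : ℕ∞) u D)
    (hruled : ∀ p ∈ D, Qf f p = -(u p) * Pf f p)
    (hburgers : ∀ p ∈ D, pdy u p + u p * pdx u p = 0) :
    (∀ p ∈ D, Hf f p = 0) ↔ (∀ p ∈ D, pdx (pdx f) p + pdy (pdy f) p = 0) := by
  have key : ∀ p ∈ D, (Hf f p = 0 ↔ pdx (pdx f) p + pdy (pdy f) p = 0) := by
    intro p hp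
    have hfp : ContDiffAt ℝ (⊤:ℕ∞) f p := hf.contDiffAt (hD.mem_nhds hp)
    have hup : ContDiffAt ℝ (⊤:ℕ∞) u p := hu.contDiffAt (hD.mem_nhds hp)
    set A := pdx (pdx f) p with hA
    set B := pdx (pdy f) p with hB
    set C := pdy (pdy f) p with hC
    set P := Pf f p with hP
    set Q := Qf f p with hQ
    set U := u p with hU
    set Ux := pdx u p with hUx
    set Uy := pdy u p with hUy
    -- differentiability facts
    have hdx : DifferentiableAt ℝ (pdx f) p := diffAt_pd hfp (1,0)
    have hdy : DifferentiableAt ℝ (pdy f) p := diffAt_pd hfp (0,1)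
    have hdu : DifferentiableAt ℝ u p := hup.differentiableAt (by simp)
    have hdPf : DifferentiableAt ℝ (Pf f) p := by
      have : Pf f = fun q => pdx f q + q.2/2 := rfl
      rw [this]; exact hdx.add (diffAt_snd_half p)
    -- derivatives of P and Q
    have hPfx : fderiv ℝ (Pf f) p (1,0) = A := by
      have : Pf f = fun q => pdx f q + q.2/2 := rfl
      rw [this, fd_add_snd hdx, hA]; simp [pdx]
    have hsym : fderiv ℝ (pdx f) p (0,1) = B := by
      rw [hB]; exact pd_symm hfp ((1,0) : ℝ×ℝ) ((0,1) : ℝ×ℝ)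
    have hPfy : fderiv ℝ (Pf f) p (0,1) = B + 1/2 := by
      have : Pf f = fun q => pdx f q + q.2/2 := rfl
      rw [this, fd_add_snd hdx, hsym]
    have hQfx : fderiv ℝ (Qf f) p (1,0) = B - 1/2 := by
      have : Qf f = fun q => pdy f q - q.1/2 := rfl
      rw [this, fd_sub_fst hdy, hB]; simp [pdx, pdy, hsym]
    have hQfy : fderiv ℝ (Qf f) p (0,1) = C := by
      have : Qf f = fun q => pdy f q - q.1/2 := rfl
      rw [this, fd_sub_fst hdy, hC]; simp [pdy]
    -- derivative of the ruled equation
    have hEq : Qf f =ᶠ[nhds p] fun q => -(u q) * Pf f q :=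
      Filter.eventuallyEq_of_mem (hD.mem_nhds hp) hruled
    have hfd : fderiv ℝ (Qf f) p = fderiv ℝ (fun q => -(u q) * Pf f q) p := hEq.fderiv_eq
    have h1 : B - 1/2 = -Ux * P + -U * A := by
      have h := DFunLike.congr_fun hfd ((1,0) : ℝ×ℝ)
      rw [hQfx, fd_neg_mul hdu hdPf, hPfx] at h
      exact h
    have h2 : C = -Uy * P + -U * (B + 1/2) := by
      have h := DFunLike.congr_fun hfd ((0,1) : ℝ×ℝ)
      rw [hQfy, fd_neg_mul hdu hdPf, hPfy] at h
      exact h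
    have h3 : Q = -U * P := hruled p hp
    have h4 : Uy + U * Ux = 0 := hburgers p hp
    -- the key algebraic identity
    have hK : Q^2*A - 2*P*Q*B + P^2*C = 0 := by
      linear_combination (A*(Q - U*P) - 2*P*B)*h3 + P^2*U*h1 + P^2*h2 - P^3*h4
    -- W is positive
    have hWpos : 0 < Wf f p := by
      rw [Wf]; positivity
    have hW2 : Wf f p ^ 2 = 1 + P^2 + Q^2 := by
      rw [Wf, sq]
      exact Real.mul_self_sqrt (by positivity)
    -- mean curvature formula
    have hH : Hf f p = (A + C) / (2 * Wf f p ^ 3) := by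
      rw [Hf, Ef, Ff, Gf, Lf, Mf, Nf]
      rw [← hA, ← hB, ← hC, ← hP, ← hQ]
      field_simp
      linear_combination hK
    rw [hH, div_eq_zero_iff]
    constructor
    · rintro (h | h)
      · exact h
      · exact absurd h (by positivity)
    · intro h; exact Or.inl h
  exact ⟨fun h p hp => (key p hp).1 (h p hp), fun h p hp => (key p hp).2 (h p hp)⟩
end
end

section
/- (Failure of Bernstein's theorem in H₃: the hyperbolic paraboloid) The function f(x,y) = xy/2 satisfies the minimal surface equation of H₃, f_xx(1 + (f_y − x/2)²) − 2f_xy(f_x + y/2)(f_y − x/2) + f_yy(1 + (f_x + y/2)²) = 0, at every point of ℝ², but it does not satisfy the Euclidean minimal surface equation f_xx(1 + f_y²) − 2f_x f_y f_xy + f_yy(1 + f_x²) = 0 at any point (x,y) with xy ≠ 0. In particular z = xy/2 is an entire (complete) non-planar minimal graph in H₃. -/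
noncomputable section

/-- The hyperbolic paraboloid `z = xy/2`. -/
def fhp : ℝ × ℝ → ℝ := fun p => p.1 * p.2 / 2


lemma hfd (p : ℝ × ℝ) : HasFDerivAt fhp
    ((p.2/2) • (ContinuousLinearMap.fst ℝ ℝ ℝ) + (p.1/2) • (ContinuousLinearMap.snd ℝ ℝ ℝ)) p := by
  have heq : fhp = fun y : ℝ × ℝ => (1/2 : ℝ) * (y.1 * y.2) := by
    funext y; simp [fhp]; ring
  rw [heq]
  have h : HasFDerivAt (fun y : ℝ × ℝ => (1/2 : ℝ) * (y.1 * y.2)) _ p := ((hasFDerivAt_fst (𝕜 := ℝ) (p := p)).mul (hasFDerivAt_snd (𝕜 := ℝ) (p := p))).const_mul (1/2 : ℝ)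
  refine h.congr_fderiv ?_
  ext v <;> simp <;> ring

lemma pdx_fhp (p : ℝ × ℝ) : pdx fhp p = p.2 / 2 := by
  simp [pdx, (hfd p).fderiv]

lemma pdy_fhp (p : ℝ × ℝ) : pdy fhp p = p.1 / 2 := by
  simp [pdy, (hfd p).fderiv]

lemma hfd2 (p : ℝ × ℝ) : HasFDerivAt (fun q : ℝ × ℝ => q.2 / 2)
    ((1/2 : ℝ) • (ContinuousLinearMap.snd ℝ ℝ ℝ)) p := by
  have heq : (fun q : ℝ × ℝ => q.2 / 2) = fun q : ℝ × ℝ => (1/2 : ℝ) * q.2 := by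
    funext q; ring
  rw [heq]
  exact (hasFDerivAt_snd (𝕜 := ℝ) (p := p)).const_mul (1/2 : ℝ)

lemma hfd1 (p : ℝ × ℝ) : HasFDerivAt (fun q : ℝ × ℝ => q.1 / 2)
    ((1/2 : ℝ) • (ContinuousLinearMap.fst ℝ ℝ ℝ)) p := by
  have heq : (fun q : ℝ × ℝ => q.1 / 2) = fun q : ℝ × ℝ => (1/2 : ℝ) * q.1 := by
    funext q; ring
  rw [heq]
  exact (hasFDerivAt_fst (𝕜 := ℝ) (p := p)).const_mul (1/2 : ℝ)

lemma pdx_eq1 : pdx fhp = fun p => p.2 / 2 := funext pdx_fhp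
lemma pdy_eq1 : pdy fhp = fun p => p.1 / 2 := funext pdy_fhp

lemma pdxx (p : ℝ × ℝ) : pdx (pdx fhp) p = 0 := by
  rw [pdx_eq1]; simp [pdx, (hfd2 p).fderiv]

lemma pdyy (p : ℝ × ℝ) : pdy (pdy fhp) p = 0 := by
  rw [pdy_eq1]; simp [pdy, (hfd1 p).fderiv]

lemma pdxy (p : ℝ × ℝ) : pdx (pdy fhp) p = 1/2 := by
  rw [pdy_eq1]; simp [pdx, (hfd1 p).fderiv]

/-- **Failure of Bernstein's theorem in `H₃`**: `f(x,y) = xy/2` satisfies the minimal surface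
equation (1.9) of `H₃` at every point of `ℝ²`, but fails the Euclidean minimal surface
equation (1.8) at every point with `xy ≠ 0`. -/
theorem hyperbolic_paraboloid_minimal_in_heisenberg_not_euclidean :
    (∀ p : ℝ × ℝ,
      pdx (pdx fhp) p * (1 + (pdy fhp p - p.1 / 2) ^ 2) -
          2 * pdx (pdy fhp) p * (pdx fhp p + p.2 / 2) * (pdy fhp p - p.1 / 2) +
          pdy (pdy fhp) p * (1 + (pdx fhp p + p.2 / 2) ^ 2) = 0) ∧
    (∀ p : ℝ × ℝ, p.1 * p.2 ≠ 0 →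
      pdx (pdx fhp) p * (1 + pdy fhp p ^ 2) -
          2 * pdx fhp p * pdy fhp p * pdx (pdy fhp) p +
          pdy (pdy fhp) p * (1 + pdx fhp p ^ 2) ≠ 0) := by
  constructor
  · intro p
    rw [pdxx, pdyy, pdxy, pdx_fhp, pdy_fhp]
    ring
  · intro p hp
    rw [pdxx, pdyy, pdxy, pdx_fhp, pdy_fhp]
    intro h
    apply hp
    nlinarith [h]
end
end

section
/- (Laplacian of the coordinate functions of the second family S₂, system (3.6.a)) Under the ruled hypothesis Q = −uP, u_y + u·u_x = 0, the Laplace–Beltrami operator Δ of the graph of f applied to the coordinate functions (x,y) ↦ x, (x,y) ↦ y and to f satisfies on D: Δx = −(P/W²)(u − 2HW), Δy = −(P/W²)(1 + 2uHW), and Δf = −(1/W²)(½P(x − uy) + HW(2 + Py + Pux)), where H = (f_xx + f_yy)/(2W³) and W² = 1 + P²(1 + u²). -/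
noncomputable section

set_option maxHeartbeats 2000000
/-- **Laplacian of the coordinate functions of the second family `S₂`** (system (3.6.a)):
under the ruled hypothesis `Q = −uP`, `u_y + u·u_x = 0`, on `D` one has
`W² = 1 + P²(1 + u²)`, `Δx = −(P/W²)(u − 2HW)`, `Δy = −(P/W²)(1 + 2uHW)` and
`Δf = −(1/W²)(½P(x − uy) + HW(2 + Py + Pux))`, where `H = (f_xx + f_yy)/(2W³)`. -/
theorem laplacian_coordinates_S2
    (D : Set (ℝ × ℝ)) (hD : IsOpen D) (hDne : D.Nonempty)
    (f : ℝ × ℝ → ℝ) (hf : ContDiffOn ℝ (⊤ : ℕ∞) f D)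
    (u : ℝ × ℝ → ℝ) (hu : ContDiffOn ℝ (⊤ : ℕ∞) u D)
    (hruled : ∀ p ∈ D, Qf f p = -(u p) * Pf f p)
    (hburgers : ∀ p ∈ D, pdy u p + u p * pdx u p = 0) :
    ∀ p ∈ D,
      (Wf f p ^ 2 = 1 + Pf f p ^ 2 * (1 + u p ^ 2)) ∧
      (lapS f (fun q => q.1) p =
        -(Pf f p / Wf f p ^ 2) * (u p - 2 * Hm f p * Wf f p)) ∧
      (lapS f (fun q => q.2) p =
        -(Pf f p / Wf f p ^ 2) * (1 + 2 * u p * Hm f p * Wf f p)) ∧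
      (lapS f f p =
        -(1 / Wf f p ^ 2) *
          ((1 / 2) * Pf f p * (p.1 - u p * p.2) +
            Hm f p * Wf f p * (2 + Pf f p * p.2 + Pf f p * u p * p.1))) := by
  intro p hp
  have hmem : D ∈ nhds p := hD.mem_nhds hp
  have hev : ∀ᶠ q in nhds p, HasFDerivAt f (fderiv ℝ f q) q := by
    filter_upwards [hmem] with q hq
    exact ((hf.contDiffAt (hD.mem_nhds hq)).differentiableAt (by simp)).hasFDerivAt
  have hf'' : HasFDerivAt (fderiv ℝ f) (fderiv ℝ (fderiv ℝ f) p) p :=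
    (((hf.contDiffAt hmem).fderiv_right (m := 1) (WithTop.coe_le_coe.mpr le_top)).differentiableAt (by simp)).hasFDerivAt
  set f'' := fderiv ℝ (fderiv ℝ f) p with hf''def
  have hsymm : ∀ v w, f'' v w = f'' w v :=
    second_derivative_symmetric_of_eventually hev hf''
  have h1 := hf''.clm_apply (hasFDerivAt_const ((1:ℝ),(0:ℝ)) p)
  have h1' : HasFDerivAt (pdx f) _ p := h1
  have h2 := hf''.clm_apply (hasFDerivAt_const ((0:ℝ),(1:ℝ)) p)
  have h2' : HasFDerivAt (pdy f) _ p := h2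
  have hsnd2 : HasFDerivAt (fun q : ℝ×ℝ => q.2 / 2) ((2:ℝ)⁻¹ • ContinuousLinearMap.snd ℝ ℝ ℝ) p := by
    simpa [div_eq_mul_inv] using (hasFDerivAt_snd (𝕜 := ℝ) (E := ℝ) (F := ℝ)).mul_const (2:ℝ)⁻¹
  have hfst2 : HasFDerivAt (fun q : ℝ×ℝ => q.1 / 2) ((2:ℝ)⁻¹ • ContinuousLinearMap.fst ℝ ℝ ℝ) p := by
    simpa [div_eq_mul_inv] using (hasFDerivAt_fst (𝕜 := ℝ) (E := ℝ) (F := ℝ)).mul_const (2:ℝ)⁻¹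
  have hP : HasFDerivAt (Pf f) _ p := h1'.add hsnd2
  have hQ : HasFDerivAt (Qf f) _ p := h2'.sub hfst2
  have hU : HasFDerivAt u (fderiv ℝ u p) p :=
    ((hu.contDiffAt hmem).differentiableAt (by simp)).hasFDerivAt
  have hA : pdx (pdx f) p = f'' (1,0) (1,0) := by
    rw [pdx, h1'.fderiv]; simp
  have hCC : pdy (pdy f) p = f'' (0,1) (0,1) := by
    rw [pdy, h2'.fderiv]; simp
  -- W facts
  have hwpos : (0:ℝ) < 1 + Pf f p * Pf f p + Qf f p * Qf f p := by
    nlinarith [mul_self_nonneg (Pf f p), mul_self_nonneg (Qf f p)]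
  have hw : HasFDerivAt (fun q => 1 + Pf f q * Pf f q + Qf f q * Qf f q) _ p :=
    ((hasFDerivAt_const (1:ℝ) p).add (hP.mul hP)).add (hQ.mul hQ)
  have hsqrt : HasFDerivAt (fun q => Real.sqrt (1 + Pf f q * Pf f q + Qf f q * Qf f q)) _ p :=
    hw.sqrt hwpos.ne'
  have hWeq : Wf f = fun q => Real.sqrt (1 + Pf f q * Pf f q + Qf f q * Qf f q) := by
    funext q; simp only [Wf, pow_two]
  have hW0 : 0 < Wf f p := by
    rw [hWeq]; exact Real.sqrt_pos.mpr hwpos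
  have hW2 : Wf f p ^ 2 = 1 + Pf f p ^ 2 + Qf f p ^ 2 := by
    rw [hWeq]; rw [Real.sq_sqrt hwpos.le]; ring
  have hsqrt0 : Real.sqrt (1 + Pf f p * Pf f p + Qf f p * Qf f p) ≠ 0 :=
    (Real.sqrt_pos.mpr hwpos).ne'
  have hinv : HasFDerivAt (fun q => (Real.sqrt (1 + Pf f q * Pf f q + Qf f q * Qf f q))⁻¹) _ p :=
    (hasDerivAt_inv hsqrt0).comp_hasFDerivAt p hsqrt
  have hGm : HasFDerivAt (fun q => 1 + Qf f q * Qf f q) _ p :=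
    (hasFDerivAt_const (1:ℝ) p).add (hQ.mul hQ)
  have hEm : HasFDerivAt (fun q => 1 + Pf f q * Pf f q) _ p :=
    (hasFDerivAt_const (1:ℝ) p).add (hP.mul hP)
  have hFm : HasFDerivAt (fun q => Pf f q * Qf f q) _ p := hP.mul hQ
  -- coordinate partials
  have hfst1 : ∀ q : ℝ×ℝ, pdx (fun r : ℝ×ℝ => r.1) q = 1 := by
    intro q; rw [pdx, (hasFDerivAt_fst (𝕜 := ℝ) (E := ℝ) (F := ℝ)).fderiv]; simp
  have hfst0 : ∀ q : ℝ×ℝ, pdy (fun r : ℝ×ℝ => r.1) q = 0 := by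
    intro q; rw [pdy, (hasFDerivAt_fst (𝕜 := ℝ) (E := ℝ) (F := ℝ)).fderiv]; simp
  have hsnd1 : ∀ q : ℝ×ℝ, pdy (fun r : ℝ×ℝ => r.2) q = 1 := by
    intro q; rw [pdy, (hasFDerivAt_snd (𝕜 := ℝ) (E := ℝ) (F := ℝ)).fderiv]; simp
  have hsnd0 : ∀ q : ℝ×ℝ, pdx (fun r : ℝ×ℝ => r.2) q = 0 := by
    intro q; rw [pdx, (hasFDerivAt_snd (𝕜 := ℝ) (E := ℝ) (F := ℝ)).fderiv]; simp
  -- the ruled relations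
  have hQP : Qf f p = -u p * Pf f p := hruled p hp
  have hfde : fderiv ℝ (Qf f) p = fderiv ℝ (fun q => -u q * Pf f q) p := by
    apply Filter.EventuallyEq.fderiv_eq
    filter_upwards [hmem] with q hq
    exact hruled q hq
  have hRHS : HasFDerivAt (fun q => -u q * Pf f q) _ p := hU.neg.mul hP
  have eq1 : fderiv ℝ (Qf f) p ((1:ℝ),(0:ℝ)) = fderiv ℝ (fun q => -u q * Pf f q) p ((1:ℝ),(0:ℝ)) := by
    rw [hfde]
  have eq2 : fderiv ℝ (Qf f) p ((0:ℝ),(1:ℝ)) = fderiv ℝ (fun q => -u q * Pf f q) p ((0:ℝ),(1:ℝ)) := by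
    rw [hfde]
  rw [hQ.fderiv, hRHS.fderiv] at eq1 eq2
  simp at eq1 eq2
  have hburg : pdy u p + u p * pdx u p = 0 := hburgers p hp
  rw [pdx, pdy] at hburg
  have hsy : f'' (0,1) (1,0) = f'' (1,0) (0,1) := hsymm _ _
  have hCrel : f'' (0,1) (0,1) = -(u p)^2 * f'' (1,0) (1,0) - 2 * u p * f'' (1,0) (0,1) := by
    linear_combination eq2 - u p * hsy - Pf f p * hburg + u p * eq1
  have hW2u : Wf f p ^ 2 = 1 + Pf f p ^ 2 + u p ^ 2 * Pf f p ^ 2 := by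
    rw [hW2, hQP]; ring
  have hWs : Real.sqrt (1 + Pf f p * Pf f p + Qf f p * Qf f p) = Wf f p := by
    rw [hWeq]
  refine ⟨by linear_combination hW2 + (Qf f p - u p * Pf f p) * hQP, ?_, ?_, ?_⟩
  · -- Δx
    have ex1 : (fun q => (Gf f q * pdx (fun r : ℝ×ℝ => r.1) q - Ff f q * pdy (fun r : ℝ×ℝ => r.1) q) / Wf f q)
        = fun q => (1 + Qf f q * Qf f q) * (Real.sqrt (1 + Pf f q * Pf f q + Qf f q * Qf f q))⁻¹ := by
      funext q
      simp [Gf, Ff, hfst1 q, hfst0 q, pow_two, div_eq_mul_inv, hWeq]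
    have ex2 : (fun q => (-(Ff f q) * pdx (fun r : ℝ×ℝ => r.1) q + Ef f q * pdy (fun r : ℝ×ℝ => r.1) q) / Wf f q)
        = fun q => (-(Pf f q * Qf f q)) * (Real.sqrt (1 + Pf f q * Pf f q + Qf f q * Qf f q))⁻¹ := by
      funext q
      simp [Ef, Ff, hfst1 q, hfst0 q, pow_two, div_eq_mul_inv, hWeq]
    simp only [lapS, Hm]
    rw [ex1, ex2, pdx, pdy, (hGm.fun_mul hinv).fderiv, ((hFm.fun_neg).fun_mul hinv).fderiv, hA, hCC]
    simp only [ContinuousLinearMap.add_apply, ContinuousLinearMap.coe_comp',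
      Function.comp_apply, ContinuousLinearMap.zero_apply, ContinuousLinearMap.flip_apply,
      ContinuousLinearMap.smul_apply, ContinuousLinearMap.coe_fst',
      ContinuousLinearMap.coe_snd', smul_eq_mul, map_zero, ContinuousLinearMap.neg_apply,
      ContinuousLinearMap.sub_apply, ContinuousLinearMap.coe_smul']
    rw [hWs, hsy, hCrel, hQP]
    set a := f'' (1,0) (1,0) with ha
    set b := f'' (1,0) (0,1) with hb
    set P := Pf f p with hPd
    set W := Wf f p with hWd
    set v := u p with hv
    field_simp
    ring_nf
    linear_combination (-2*P*v - 4*P*v*b - 4*P*v^2*a) * hW2u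
  · -- Δy
    have ey1 : (fun q => (Gf f q * pdx (fun r : ℝ×ℝ => r.2) q - Ff f q * pdy (fun r : ℝ×ℝ => r.2) q) / Wf f q)
        = fun q => (-(Pf f q * Qf f q)) * (Real.sqrt (1 + Pf f q * Pf f q + Qf f q * Qf f q))⁻¹ := by
      funext q
      simp [Gf, Ff, hsnd1 q, hsnd0 q, pow_two, div_eq_mul_inv, hWeq]
    have ey2 : (fun q => (-(Ff f q) * pdx (fun r : ℝ×ℝ => r.2) q + Ef f q * pdy (fun r : ℝ×ℝ => r.2) q) / Wf f q)
        = fun q => (1 + Pf f q * Pf f q) * (Real.sqrt (1 + Pf f q * Pf f q + Qf f q * Qf f q))⁻¹ := by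
      funext q
      simp [Ef, Ff, hsnd1 q, hsnd0 q, pow_two, div_eq_mul_inv, hWeq]
    simp only [lapS, Hm]
    rw [ey1, ey2, pdx, pdy, ((hFm.fun_neg).fun_mul hinv).fderiv, (hEm.fun_mul hinv).fderiv, hA, hCC]
    simp only [ContinuousLinearMap.add_apply, ContinuousLinearMap.coe_comp',
      Function.comp_apply, ContinuousLinearMap.zero_apply, ContinuousLinearMap.flip_apply,
      ContinuousLinearMap.smul_apply, ContinuousLinearMap.coe_fst',
      ContinuousLinearMap.coe_snd', smul_eq_mul, map_zero, ContinuousLinearMap.neg_apply,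
      ContinuousLinearMap.sub_apply, ContinuousLinearMap.coe_smul']
    rw [hWs, hsy, hCrel, hQP]
    set a := f'' (1,0) (1,0) with ha
    set b := f'' (1,0) (0,1) with hb
    set P := Pf f p with hPd
    set W := Wf f p with hWd
    set v := u p with hv
    field_simp
    ring_nf
    linear_combination (-2*P - 4*P*b - 4*P*v*a) * hW2u
  · -- Δf
    have hpdxv : pdx f p = Pf f p - p.2 / 2 := by simp [Pf]
    have hpdyv : pdy f p = Qf f p + p.1 / 2 := by simp [Qf]
    have ef1 : (fun q => (Gf f q * pdx f q - Ff f q * pdy f q) / Wf f q)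
        = fun q => ((1 + Qf f q * Qf f q) * pdx f q - (Pf f q * Qf f q) * pdy f q) * (Real.sqrt (1 + Pf f q * Pf f q + Qf f q * Qf f q))⁻¹ := by
      funext q
      simp [Gf, Ff, pow_two, div_eq_mul_inv, hWeq]
    have ef2 : (fun q => (-(Ff f q) * pdx f q + Ef f q * pdy f q) / Wf f q)
        = fun q => ((-(Pf f q * Qf f q)) * pdx f q + (1 + Pf f q * Pf f q) * pdy f q) * (Real.sqrt (1 + Pf f q * Pf f q + Qf f q * Qf f q))⁻¹ := by
      funext q
      simp [Ef, Ff, pow_two, div_eq_mul_inv, hWeq]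
    simp only [lapS, Hm]
    rw [ef1, ef2, pdx, pdy,
      (((hGm.fun_mul h1').fun_sub (hFm.fun_mul h2')).fun_mul hinv).fderiv,
      ((((hFm.fun_neg).fun_mul h1').fun_add (hEm.fun_mul h2')).fun_mul hinv).fderiv, hA, hCC]
    simp only [ContinuousLinearMap.add_apply, ContinuousLinearMap.coe_comp',
      Function.comp_apply, ContinuousLinearMap.zero_apply, ContinuousLinearMap.flip_apply,
      ContinuousLinearMap.smul_apply, ContinuousLinearMap.coe_fst',
      ContinuousLinearMap.coe_snd', smul_eq_mul, map_zero, ContinuousLinearMap.neg_apply,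
      ContinuousLinearMap.sub_apply, ContinuousLinearMap.coe_smul']
    rw [hWs, hsy, hCrel, hpdxv, hpdyv, hQP]
    set a := f'' (1,0) (1,0) with ha
    set b := f'' (1,0) (0,1) with hb
    set P := Pf f p with hPd
    set W := Wf f p with hWd
    set v := u p with hv
    set x := p.1 with hx
    set y := p.2 with hy
    field_simp
    ring_nf
    linear_combination (-8*a + 16*v*b + 8*v^2*a - 2*P*x - 4*P*b*x + 2*P*v*y + 4*P*v*b*y - 4*P*v*a*x + 4*P*v^2*a*y) * hW2u
end
end

section
/- (Reduction of the finite-type system for the second family, equation (3)(3.6.b)) Under the ruled hypothesis Q = −uP, u_y + u·u_x = 0, suppose there exist real constants λ₁, λ₂, λ₃ with Δx = λ₁·x, Δy = λ₂·y, Δf = λ₃·f on D. Then 4H/W = (λ₂ − λ₁)·xy − 2λ₃·f on D; equivalently, f satisfies the partial differential equation f_xx + f_yy = ½((λ₂ − λ₁)xy − 2λ₃ f)·(1 + (f_x + y/2)²(1 + u²))². -/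
noncomputable section

private theorem hasFDerivAt_div'' {c d : ℝ × ℝ → ℝ} {c' d' : ℝ × ℝ →L[ℝ] ℝ} {x : ℝ × ℝ}
    (hc : HasFDerivAt c c' x) (hd : HasFDerivAt d d' x) (hx : d x ≠ 0) :
    HasFDerivAt (fun y => c y / d y)
      (c x • (-((((d x) ^ 2)⁻¹) • d')) + (d x)⁻¹ • c') x := by
  have hinv : HasFDerivAt (fun y => (d y)⁻¹) (-((((d x) ^ 2)⁻¹) • d')) x := by
    simpa [Function.comp_def] using (hasDerivAt_inv hx).comp_hasFDerivAt x hd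
  simpa [div_eq_mul_inv, Pi.mul_def] using hc.mul hinv

private theorem hasFDerivAt_sq'' {g : ℝ × ℝ → ℝ} {g' : ℝ × ℝ →L[ℝ] ℝ} {x : ℝ × ℝ}
    (hg : HasFDerivAt g g' x) :
    HasFDerivAt (fun y => g y ^ 2) ((2 * g x) • g') x := by
  have := hg.mul hg
  simpa [pow_two, two_mul, add_smul, mul_smul, Pi.mul_def] using this

set_option maxHeartbeats 2000000 in
/-- **Reduction of the finite-type system for the second family** (equation (3) of (3.6.b)):
under the ruled hypothesis `Q = −uP`, `u_y + u·u_x = 0`, if `Δx = λ₁x`, `Δy = λ₂y`, `Δf = λ₃f`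
on `D`, then `4H/W = (λ₂ − λ₁)xy − 2λ₃f` on `D`; equivalently
`f_xx + f_yy = ½((λ₂ − λ₁)xy − 2λ₃f)(1 + (f_x + y/2)²(1 + u²))²`. -/
theorem finite_type_S2_reduction
    (D : Set (ℝ × ℝ)) (hD : IsOpen D) (hDne : D.Nonempty)
    (f : ℝ × ℝ → ℝ) (hf : ContDiffOn ℝ (⊤ : ℕ∞) f D)
    (u : ℝ × ℝ → ℝ) (hu : ContDiffOn ℝ (⊤ : ℕ∞) u D)
    (hruled : ∀ p ∈ D, Qf f p = -(u p) * Pf f p)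
    (hburgers : ∀ p ∈ D, pdy u p + u p * pdx u p = 0)
    (l1 l2 l3 : ℝ)
    (h1 : ∀ p ∈ D, lapS f (fun q => q.1) p = l1 * p.1)
    (h2 : ∀ p ∈ D, lapS f (fun q => q.2) p = l2 * p.2)
    (h3 : ∀ p ∈ D, lapS f f p = l3 * f p) :
    ∀ p ∈ D,
      (4 * Hm f p / Wf f p = (l2 - l1) * (p.1 * p.2) - 2 * l3 * f p) ∧
      (pdx (pdx f) p + pdy (pdy f) p =
        (1 / 2) * ((l2 - l1) * (p.1 * p.2) - 2 * l3 * f p) *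
          (1 + (pdx f p + p.2 / 2) ^ 2 * (1 + u p ^ 2)) ^ 2) := by
  intro p hp
  have hmem : D ∈ nhds p := hD.mem_nhds hp
  have hfp : ContDiffAt ℝ (⊤ : ℕ∞) f p := hf.contDiffAt hmem
  have hup : ContDiffAt ℝ (⊤ : ℕ∞) u p := hu.contDiffAt hmem
  have hf1 : ContDiffAt ℝ 1 (fderiv ℝ f) p :=
    hfp.fderiv_right (by norm_cast)
  have hdx : DifferentiableAt ℝ (pdx f) p :=
    (hf1.differentiableAt one_ne_zero).clm_apply (differentiableAt_const _)
  have hdy : DifferentiableAt ℝ (pdy f) p :=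
    (hf1.differentiableAt one_ne_zero).clm_apply (differentiableAt_const _)
  have hFx : HasFDerivAt (pdx f) (fderiv ℝ (pdx f) p) p := hdx.hasFDerivAt
  have hFy : HasFDerivAt (pdy f) (fderiv ℝ (pdy f) p) p := hdy.hasFDerivAt
  have hU : HasFDerivAt u (fderiv ℝ u p) p :=
    (hup.differentiableAt (by norm_cast)).hasFDerivAt
  have hx2 : HasFDerivAt (fun q : ℝ × ℝ => q.1 / 2)
      ((2:ℝ)⁻¹ • ContinuousLinearMap.fst ℝ ℝ ℝ) p := by
    simpa [div_eq_mul_inv, mul_comm] using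
      (hasFDerivAt_fst (𝕜 := ℝ) (E := ℝ) (F := ℝ) (p := p)).const_mul (2:ℝ)⁻¹
  have hy2 : HasFDerivAt (fun q : ℝ × ℝ => q.2 / 2)
      ((2:ℝ)⁻¹ • ContinuousLinearMap.snd ℝ ℝ ℝ) p := by
    simpa [div_eq_mul_inv, mul_comm] using
      (hasFDerivAt_snd (𝕜 := ℝ) (E := ℝ) (F := ℝ) (p := p)).const_mul (2:ℝ)⁻¹
  have hP : HasFDerivAt (Pf f) _ p := hFx.add hy2
  have hQ : HasFDerivAt (Qf f) _ p := hFy.sub hx2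
  have hE : HasFDerivAt (Ef f) _ p := (hasFDerivAt_sq'' hP).const_add 1
  have hFf : HasFDerivAt (Ff f) _ p := hP.mul hQ
  have hG : HasFDerivAt (Gf f) _ p := (hasFDerivAt_sq'' hQ).const_add 1
  have hSpos : (0:ℝ) < 1 + Pf f p ^ 2 + Qf f p ^ 2 := by positivity
  have hS : HasFDerivAt (fun q => 1 + Pf f q ^ 2 + Qf f q ^ 2) _ p :=
    ((hasFDerivAt_sq'' hP).const_add 1).add (hasFDerivAt_sq'' hQ)
  have hW : HasFDerivAt (Wf f) _ p :=
    (Real.hasDerivAt_sqrt hSpos.ne').comp_hasFDerivAt p hS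
  have hWpos : (0:ℝ) < Wf f p := Real.sqrt_pos.mpr hSpos
  have hWne : Wf f p ≠ 0 := hWpos.ne'
  have hA1 : HasFDerivAt (fun q => Gf f q / Wf f q) _ p := hasFDerivAt_div'' hG hW hWne
  have hA2 : HasFDerivAt (fun q => -(Ff f q) / Wf f q) _ p := hasFDerivAt_div'' hFf.neg hW hWne
  have hA4 : HasFDerivAt (fun q => Ef f q / Wf f q) _ p := hasFDerivAt_div'' hE hW hWne
  have hA5 : HasFDerivAt (fun q => (Gf f q * pdx f q - Ff f q * pdy f q) / Wf f q) _ p :=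
    hasFDerivAt_div'' ((hG.mul hFx).sub (hFf.mul hFy)) hW hWne
  have hA6 : HasFDerivAt (fun q => (-(Ff f q) * pdx f q + Ef f q * pdy f q) / Wf f q) _ p :=
    hasFDerivAt_div'' ((hFf.neg.mul hFx).add (hE.mul hFy)) hW hWne
  have hfx0 : pdx f p = Pf f p - p.2 / 2 := by simp [Pf]
  have hfy0 : pdy f p = Qf f p + p.1 / 2 := by simp [Qf]
  have c1 : (fun q => (Gf f q * pdx (fun r => r.1) q - Ff f q * pdy (fun r => r.1) q) / Wf f q)
      = fun q => Gf f q / Wf f q := by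
    funext q; simp [pdx, pdy, fderiv_fst, fderiv_snd]
  have c2 : (fun q => (-(Ff f q) * pdx (fun r => r.1) q + Ef f q * pdy (fun r => r.1) q) / Wf f q)
      = fun q => -(Ff f q) / Wf f q := by
    funext q; simp [pdx, pdy, fderiv_fst, fderiv_snd]
  have c3 : (fun q => (Gf f q * pdx (fun r => r.2) q - Ff f q * pdy (fun r => r.2) q) / Wf f q)
      = fun q => -(Ff f q) / Wf f q := by
    funext q; simp [pdx, pdy, fderiv_fst, fderiv_snd]
  have c4 : (fun q => (-(Ff f q) * pdx (fun r => r.2) q + Ef f q * pdy (fun r => r.2) q) / Wf f q)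
      = fun q => Ef f q / Wf f q := by
    funext q; simp [pdx, pdy, fderiv_fst, fderiv_snd]
  have v1x : pdx (fun q => Gf f q / Wf f q) p =
      (2 * Qf f p * (pdx (pdy f) p - 1/2)) / Wf f p - (1 + Qf f p ^ 2) * (Pf f p * pdx (pdx f) p + Qf f p * (pdx (pdy f) p - 1/2)) / Wf f p ^ 3 := by
    show fderiv ℝ _ p ((1:ℝ), (0:ℝ)) = _
    rw [hA1.fderiv]
    simp [ContinuousLinearMap.add_apply, ContinuousLinearMap.sub_apply,
      ContinuousLinearMap.smul_apply, ContinuousLinearMap.neg_apply,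
      ContinuousLinearMap.coe_fst', ContinuousLinearMap.coe_snd', smul_eq_mul,
      (show Gf f p = 1 + Qf f p ^ 2 from rfl), (show Ef f p = 1 + Pf f p ^ 2 from rfl),
      (show Ff f p = Pf f p * Qf f p from rfl),
      (show Real.sqrt (1 + Pf f p ^ 2 + Qf f p ^ 2) = Wf f p from rfl),
      (show fderiv ℝ (pdx f) p ((1:ℝ), (0:ℝ)) = pdx (pdx f) p from rfl),
      (show fderiv ℝ (pdx f) p ((0:ℝ), (1:ℝ)) = pdy (pdx f) p from rfl),
      (show fderiv ℝ (pdy f) p ((1:ℝ), (0:ℝ)) = pdx (pdy f) p from rfl),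
      (show fderiv ℝ (pdy f) p ((0:ℝ), (1:ℝ)) = pdy (pdy f) p from rfl),
      (show fderiv ℝ u p ((1:ℝ), (0:ℝ)) = pdx u p from rfl),
      (show fderiv ℝ u p ((0:ℝ), (1:ℝ)) = pdy u p from rfl), hfx0, hfy0]
    ring
  have v2y : pdy (fun q => -(Ff f q) / Wf f q) p =
      (-((pdy (pdx f) p + 1/2) * Qf f p + Pf f p * pdy (pdy f) p)) / Wf f p - (-(Pf f p * Qf f p)) * (Pf f p * (pdy (pdx f) p + 1/2) + Qf f p * pdy (pdy f) p) / Wf f p ^ 3 := by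
    show fderiv ℝ _ p ((0:ℝ), (1:ℝ)) = _
    rw [hA2.fderiv]
    simp [ContinuousLinearMap.add_apply, ContinuousLinearMap.sub_apply,
      ContinuousLinearMap.smul_apply, ContinuousLinearMap.neg_apply,
      ContinuousLinearMap.coe_fst', ContinuousLinearMap.coe_snd', smul_eq_mul,
      (show Gf f p = 1 + Qf f p ^ 2 from rfl), (show Ef f p = 1 + Pf f p ^ 2 from rfl),
      (show Ff f p = Pf f p * Qf f p from rfl),
      (show Real.sqrt (1 + Pf f p ^ 2 + Qf f p ^ 2) = Wf f p from rfl),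
      (show fderiv ℝ (pdx f) p ((1:ℝ), (0:ℝ)) = pdx (pdx f) p from rfl),
      (show fderiv ℝ (pdx f) p ((0:ℝ), (1:ℝ)) = pdy (pdx f) p from rfl),
      (show fderiv ℝ (pdy f) p ((1:ℝ), (0:ℝ)) = pdx (pdy f) p from rfl),
      (show fderiv ℝ (pdy f) p ((0:ℝ), (1:ℝ)) = pdy (pdy f) p from rfl),
      (show fderiv ℝ u p ((1:ℝ), (0:ℝ)) = pdx u p from rfl),
      (show fderiv ℝ u p ((0:ℝ), (1:ℝ)) = pdy u p from rfl), hfx0, hfy0]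
    ring
  have v3x : pdx (fun q => -(Ff f q) / Wf f q) p =
      (-(pdx (pdx f) p * Qf f p + Pf f p * (pdx (pdy f) p - 1/2))) / Wf f p - (-(Pf f p * Qf f p)) * (Pf f p * pdx (pdx f) p + Qf f p * (pdx (pdy f) p - 1/2)) / Wf f p ^ 3 := by
    show fderiv ℝ _ p ((1:ℝ), (0:ℝ)) = _
    rw [hA2.fderiv]
    simp [ContinuousLinearMap.add_apply, ContinuousLinearMap.sub_apply,
      ContinuousLinearMap.smul_apply, ContinuousLinearMap.neg_apply,
      ContinuousLinearMap.coe_fst', ContinuousLinearMap.coe_snd', smul_eq_mul,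
      (show Gf f p = 1 + Qf f p ^ 2 from rfl), (show Ef f p = 1 + Pf f p ^ 2 from rfl),
      (show Ff f p = Pf f p * Qf f p from rfl),
      (show Real.sqrt (1 + Pf f p ^ 2 + Qf f p ^ 2) = Wf f p from rfl),
      (show fderiv ℝ (pdx f) p ((1:ℝ), (0:ℝ)) = pdx (pdx f) p from rfl),
      (show fderiv ℝ (pdx f) p ((0:ℝ), (1:ℝ)) = pdy (pdx f) p from rfl),
      (show fderiv ℝ (pdy f) p ((1:ℝ), (0:ℝ)) = pdx (pdy f) p from rfl),
      (show fderiv ℝ (pdy f) p ((0:ℝ), (1:ℝ)) = pdy (pdy f) p from rfl),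
      (show fderiv ℝ u p ((1:ℝ), (0:ℝ)) = pdx u p from rfl),
      (show fderiv ℝ u p ((0:ℝ), (1:ℝ)) = pdy u p from rfl), hfx0, hfy0]
    ring
  have v4y : pdy (fun q => Ef f q / Wf f q) p =
      (2 * Pf f p * (pdy (pdx f) p + 1/2)) / Wf f p - (1 + Pf f p ^ 2) * (Pf f p * (pdy (pdx f) p + 1/2) + Qf f p * pdy (pdy f) p) / Wf f p ^ 3 := by
    show fderiv ℝ _ p ((0:ℝ), (1:ℝ)) = _
    rw [hA4.fderiv]
    simp [ContinuousLinearMap.add_apply, ContinuousLinearMap.sub_apply,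
      ContinuousLinearMap.smul_apply, ContinuousLinearMap.neg_apply,
      ContinuousLinearMap.coe_fst', ContinuousLinearMap.coe_snd', smul_eq_mul,
      (show Gf f p = 1 + Qf f p ^ 2 from rfl), (show Ef f p = 1 + Pf f p ^ 2 from rfl),
      (show Ff f p = Pf f p * Qf f p from rfl),
      (show Real.sqrt (1 + Pf f p ^ 2 + Qf f p ^ 2) = Wf f p from rfl),
      (show fderiv ℝ (pdx f) p ((1:ℝ), (0:ℝ)) = pdx (pdx f) p from rfl),
      (show fderiv ℝ (pdx f) p ((0:ℝ), (1:ℝ)) = pdy (pdx f) p from rfl),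
      (show fderiv ℝ (pdy f) p ((1:ℝ), (0:ℝ)) = pdx (pdy f) p from rfl),
      (show fderiv ℝ (pdy f) p ((0:ℝ), (1:ℝ)) = pdy (pdy f) p from rfl),
      (show fderiv ℝ u p ((1:ℝ), (0:ℝ)) = pdx u p from rfl),
      (show fderiv ℝ u p ((0:ℝ), (1:ℝ)) = pdy u p from rfl), hfx0, hfy0]
    ring
  have v5x : pdx (fun q => (Gf f q * pdx f q - Ff f q * pdy f q) / Wf f q) p =
      (2 * Qf f p * (pdx (pdy f) p - 1/2) * (Pf f p - p.2/2) + (1 + Qf f p ^ 2) * pdx (pdx f) p - (pdx (pdx f) p * Qf f p + Pf f p * (pdx (pdy f) p - 1/2)) * (Qf f p + p.1/2) - Pf f p * Qf f p * pdx (pdy f) p) / Wf f p - ((1 + Qf f p ^ 2) * (Pf f p - p.2/2) - Pf f p * Qf f p * (Qf f p + p.1/2)) * (Pf f p * pdx (pdx f) p + Qf f p * (pdx (pdy f) p - 1/2)) / Wf f p ^ 3 := by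
    show fderiv ℝ _ p ((1:ℝ), (0:ℝ)) = _
    rw [hA5.fderiv]
    simp [ContinuousLinearMap.add_apply, ContinuousLinearMap.sub_apply,
      ContinuousLinearMap.smul_apply, ContinuousLinearMap.neg_apply,
      ContinuousLinearMap.coe_fst', ContinuousLinearMap.coe_snd', smul_eq_mul,
      (show Gf f p = 1 + Qf f p ^ 2 from rfl), (show Ef f p = 1 + Pf f p ^ 2 from rfl),
      (show Ff f p = Pf f p * Qf f p from rfl),
      (show Real.sqrt (1 + Pf f p ^ 2 + Qf f p ^ 2) = Wf f p from rfl),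
      (show fderiv ℝ (pdx f) p ((1:ℝ), (0:ℝ)) = pdx (pdx f) p from rfl),
      (show fderiv ℝ (pdx f) p ((0:ℝ), (1:ℝ)) = pdy (pdx f) p from rfl),
      (show fderiv ℝ (pdy f) p ((1:ℝ), (0:ℝ)) = pdx (pdy f) p from rfl),
      (show fderiv ℝ (pdy f) p ((0:ℝ), (1:ℝ)) = pdy (pdy f) p from rfl),
      (show fderiv ℝ u p ((1:ℝ), (0:ℝ)) = pdx u p from rfl),
      (show fderiv ℝ u p ((0:ℝ), (1:ℝ)) = pdy u p from rfl), hfx0, hfy0]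
    ring
  have v6y : pdy (fun q => (-(Ff f q) * pdx f q + Ef f q * pdy f q) / Wf f q) p =
      (-((pdy (pdx f) p + 1/2) * Qf f p + Pf f p * pdy (pdy f) p) * (Pf f p - p.2/2) - Pf f p * Qf f p * pdy (pdx f) p + 2 * Pf f p * (pdy (pdx f) p + 1/2) * (Qf f p + p.1/2) + (1 + Pf f p ^ 2) * pdy (pdy f) p) / Wf f p - (-(Pf f p * Qf f p) * (Pf f p - p.2/2) + (1 + Pf f p ^ 2) * (Qf f p + p.1/2)) * (Pf f p * (pdy (pdx f) p + 1/2) + Qf f p * pdy (pdy f) p) / Wf f p ^ 3 := by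
    show fderiv ℝ _ p ((0:ℝ), (1:ℝ)) = _
    rw [hA6.fderiv]
    simp [ContinuousLinearMap.add_apply, ContinuousLinearMap.sub_apply,
      ContinuousLinearMap.smul_apply, ContinuousLinearMap.neg_apply,
      ContinuousLinearMap.coe_fst', ContinuousLinearMap.coe_snd', smul_eq_mul,
      (show Gf f p = 1 + Qf f p ^ 2 from rfl), (show Ef f p = 1 + Pf f p ^ 2 from rfl),
      (show Ff f p = Pf f p * Qf f p from rfl),
      (show Real.sqrt (1 + Pf f p ^ 2 + Qf f p ^ 2) = Wf f p from rfl),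
      (show fderiv ℝ (pdx f) p ((1:ℝ), (0:ℝ)) = pdx (pdx f) p from rfl),
      (show fderiv ℝ (pdx f) p ((0:ℝ), (1:ℝ)) = pdy (pdx f) p from rfl),
      (show fderiv ℝ (pdy f) p ((1:ℝ), (0:ℝ)) = pdx (pdy f) p from rfl),
      (show fderiv ℝ (pdy f) p ((0:ℝ), (1:ℝ)) = pdy (pdy f) p from rfl),
      (show fderiv ℝ u p ((1:ℝ), (0:ℝ)) = pdx u p from rfl),
      (show fderiv ℝ u p ((0:ℝ), (1:ℝ)) = pdy u p from rfl), hfx0, hfy0]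
    ring

  have m1 : l1 * p.1 * Wf f p ^ 4 =
      -((2 * Qf f p * (pdx (pdy f) p - 1/2)) * Wf f p ^ 2 - (1 + Qf f p ^ 2) * (Pf f p * pdx (pdx f) p + Qf f p * (pdx (pdy f) p - 1/2)) + (-((pdy (pdx f) p + 1/2) * Qf f p + Pf f p * pdy (pdy f) p)) * Wf f p ^ 2 - (-(Pf f p * Qf f p)) * (Pf f p * (pdy (pdx f) p + 1/2) + Qf f p * pdy (pdy f) p)) := by
    rw [← h1 p hp]
    simp only [lapS]
    rw [c1, c2, v1x, v2y]
    field_simp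
    ring
  have m2 : l2 * p.2 * Wf f p ^ 4 =
      -((-(pdx (pdx f) p * Qf f p + Pf f p * (pdx (pdy f) p - 1/2))) * Wf f p ^ 2 - (-(Pf f p * Qf f p)) * (Pf f p * pdx (pdx f) p + Qf f p * (pdx (pdy f) p - 1/2)) + (2 * Pf f p * (pdy (pdx f) p + 1/2)) * Wf f p ^ 2 - (1 + Pf f p ^ 2) * (Pf f p * (pdy (pdx f) p + 1/2) + Qf f p * pdy (pdy f) p)) := by
    rw [← h2 p hp]
    simp only [lapS]
    rw [c3, c4, v3x, v4y]
    field_simp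
    ring
  have m3 : l3 * f p * Wf f p ^ 4 =
      -((2 * Qf f p * (pdx (pdy f) p - 1/2) * (Pf f p - p.2/2) + (1 + Qf f p ^ 2) * pdx (pdx f) p - (pdx (pdx f) p * Qf f p + Pf f p * (pdx (pdy f) p - 1/2)) * (Qf f p + p.1/2) - Pf f p * Qf f p * pdx (pdy f) p) * Wf f p ^ 2 - ((1 + Qf f p ^ 2) * (Pf f p - p.2/2) - Pf f p * Qf f p * (Qf f p + p.1/2)) * (Pf f p * pdx (pdx f) p + Qf f p * (pdx (pdy f) p - 1/2)) + (-((pdy (pdx f) p + 1/2) * Qf f p + Pf f p * pdy (pdy f) p) * (Pf f p - p.2/2) - Pf f p * Qf f p * pdy (pdx f) p + 2 * Pf f p * (pdy (pdx f) p + 1/2) * (Qf f p + p.1/2) + (1 + Pf f p ^ 2) * pdy (pdy f) p) * Wf f p ^ 2 - (-(Pf f p * Qf f p) * (Pf f p - p.2/2) + (1 + Pf f p ^ 2) * (Qf f p + p.1/2)) * (Pf f p * (pdy (pdx f) p + 1/2) + Qf f p * pdy (pdy f) p)) := by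
    rw [← h3 p hp]
    simp only [lapS]
    rw [v5x, v6y]
    field_simp
    ring
  have hQfe : fderiv ℝ (Qf f) p = fderiv ℝ (fun q => -(u q) * Pf f q) p :=
    (Filter.eventuallyEq_of_mem hmem hruled).fderiv_eq
  have hRr : HasFDerivAt (fun q => -(u q) * Pf f q) _ p := (hU.neg).mul hP
  have hQR := hQ.fderiv.symm.trans (hQfe.trans hRr.fderiv)
  have R1 : pdx (pdy f) p = 1/2 - u p * pdx (pdx f) p - Pf f p * pdx u p := by
    have h := congrArg (fun L : ℝ × ℝ →L[ℝ] ℝ => L ((1:ℝ), (0:ℝ))) hQR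
    simp only [ContinuousLinearMap.add_apply, ContinuousLinearMap.sub_apply,
      ContinuousLinearMap.smul_apply, ContinuousLinearMap.neg_apply,
      ContinuousLinearMap.coe_fst', ContinuousLinearMap.coe_snd', smul_eq_mul,
      (show Gf f p = 1 + Qf f p ^ 2 from rfl), (show Ef f p = 1 + Pf f p ^ 2 from rfl),
      (show Ff f p = Pf f p * Qf f p from rfl),
      (show Real.sqrt (1 + Pf f p ^ 2 + Qf f p ^ 2) = Wf f p from rfl),
      (show fderiv ℝ (pdx f) p ((1:ℝ), (0:ℝ)) = pdx (pdx f) p from rfl),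
      (show fderiv ℝ (pdx f) p ((0:ℝ), (1:ℝ)) = pdy (pdx f) p from rfl),
      (show fderiv ℝ (pdy f) p ((1:ℝ), (0:ℝ)) = pdx (pdy f) p from rfl),
      (show fderiv ℝ (pdy f) p ((0:ℝ), (1:ℝ)) = pdy (pdy f) p from rfl),
      (show fderiv ℝ u p ((1:ℝ), (0:ℝ)) = pdx u p from rfl),
      (show fderiv ℝ u p ((0:ℝ), (1:ℝ)) = pdy u p from rfl), hfx0, hfy0, Prod.fst, Prod.snd, Pi.neg_apply] at h
    linear_combination h
  have R2 : pdy (pdy f) p = -(u p) * (pdy (pdx f) p + 1/2) - Pf f p * pdy u p := by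
    have h := congrArg (fun L : ℝ × ℝ →L[ℝ] ℝ => L ((0:ℝ), (1:ℝ))) hQR
    simp only [ContinuousLinearMap.add_apply, ContinuousLinearMap.sub_apply,
      ContinuousLinearMap.smul_apply, ContinuousLinearMap.neg_apply,
      ContinuousLinearMap.coe_fst', ContinuousLinearMap.coe_snd', smul_eq_mul,
      (show Gf f p = 1 + Qf f p ^ 2 from rfl), (show Ef f p = 1 + Pf f p ^ 2 from rfl),
      (show Ff f p = Pf f p * Qf f p from rfl),
      (show Real.sqrt (1 + Pf f p ^ 2 + Qf f p ^ 2) = Wf f p from rfl),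
      (show fderiv ℝ (pdx f) p ((1:ℝ), (0:ℝ)) = pdx (pdx f) p from rfl),
      (show fderiv ℝ (pdx f) p ((0:ℝ), (1:ℝ)) = pdy (pdx f) p from rfl),
      (show fderiv ℝ (pdy f) p ((1:ℝ), (0:ℝ)) = pdx (pdy f) p from rfl),
      (show fderiv ℝ (pdy f) p ((0:ℝ), (1:ℝ)) = pdy (pdy f) p from rfl),
      (show fderiv ℝ u p ((1:ℝ), (0:ℝ)) = pdx u p from rfl),
      (show fderiv ℝ u p ((0:ℝ), (1:ℝ)) = pdy u p from rfl), hfx0, hfy0, Prod.fst, Prod.snd, Pi.neg_apply] at h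
    linear_combination h
  have hb : pdy u p + u p * pdx u p = 0 := hburgers p hp
  have hr : Qf f p = -(u p) * Pf f p := hruled p hp
  have hW2 : Wf f p ^ 2 = 1 + Pf f p ^ 2 + Qf f p ^ 2 := Real.sq_sqrt hSpos.le
  have hac : Qf f p ^ 2 * pdx (pdx f) p + Pf f p ^ 2 * pdy (pdy f) p - Pf f p * Qf f p * (pdx (pdy f) p + pdy (pdx f) p) = 0 := by
    linear_combination (pdx (pdx f) p * Qf f p - pdx (pdx f) p * u p * Pf f p - Pf f p * (pdx (pdy f) p + pdy (pdx f) p)) * hr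
      + (Pf f p ^ 2 * u p) * R1 + (Pf f p ^ 2) * R2 + (-(Pf f p ^ 3)) * hb
  have key : ((l2 - l1) * (p.1 * p.2) - 2 * l3 * f p) * Wf f p ^ 4
      = 2 * (pdx (pdx f) p + pdy (pdy f) p) := by
    linear_combination p.1 * m2 - p.2 * m1 - 2 * m3 + (2 * (pdx (pdx f) p + pdy (pdy f) p)) * hW2 + 2 * hac
  constructor
  · have g1 : (l2 - l1) * (p.1 * p.2) - 2 * l3 * f p
        = 2 * (pdx (pdx f) p + pdy (pdy f) p) / Wf f p ^ 4 := by
      rw [eq_div_iff (pow_ne_zero 4 hWne)]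
      linear_combination key
    rw [g1, (show Hm f p = (pdx (pdx f) p + pdy (pdy f) p) / (2 * Wf f p ^ 3) from rfl)]
    field_simp
    ring
  · have hPd : pdx f p + p.2 / 2 = Pf f p := rfl
    rw [hPd]
    have hw4 : Wf f p ^ 4 = (1 + Pf f p ^ 2 * (1 + u p ^ 2)) ^ 2 := by
      linear_combination (Wf f p ^ 2 + (1 + Pf f p ^ 2 + Qf f p ^ 2)) * hW2
        + ((1 + Pf f p ^ 2 + Qf f p ^ 2 + 1 + Pf f p ^ 2 + u p ^ 2 * Pf f p ^ 2) * (Qf f p - u p * Pf f p)) * hr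
    linear_combination (-(1/2)) * key
      + ((1/2) * ((l2 - l1) * (p.1 * p.2) - 2 * l3 * f p)) * hw4
end
end

section
/- (Second family, Case λ₁ = λ₃ = 0, λ₂ ≠ 0) Under the ruled hypothesis Q = −uP, u_y + u·u_x = 0, suppose Δx = λ₁·x, Δy = λ₂·y, Δf = λ₃·f on D for real constants with λ₁ = λ₃ = 0, λ₂ ≠ 0, and suppose P is nowhere zero on D. Then H₁ = uW, i.e. f_xx + f_yy = u·(1 + P²(1 + u²)) on D, and moreover −P(1 + u²)/W² = λ₂·y and 2u/W² = λ₂·xy on D. -/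
noncomputable section

set_option maxHeartbeats 2000000

namespace FT2Aux

variable {g h : ℝ × ℝ → ℝ} {p : ℝ × ℝ}

lemma fdv_add (hg : DifferentiableAt ℝ g p) (hh : DifferentiableAt ℝ h p) (v : ℝ × ℝ) :
    fderiv ℝ (fun q => g q + h q) p v = fderiv ℝ g p v + fderiv ℝ h p v := by
  rw [fderiv_fun_add hg hh]; rfl

lemma fdv_sub (hg : DifferentiableAt ℝ g p) (hh : DifferentiableAt ℝ h p) (v : ℝ × ℝ) :
    fderiv ℝ (fun q => g q - h q) p v = fderiv ℝ g p v - fderiv ℝ h p v := by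
  rw [fderiv_fun_sub hg hh]; rfl

lemma fdv_neg (v : ℝ × ℝ) :
    fderiv ℝ (fun q => -(g q)) p v = -(fderiv ℝ g p v) := by
  rw [fderiv_fun_neg]; rfl

lemma fdv_mul (hg : DifferentiableAt ℝ g p) (hh : DifferentiableAt ℝ h p) (v : ℝ × ℝ) :
    fderiv ℝ (fun q => g q * h q) p v = g p * fderiv ℝ h p v + h p * fderiv ℝ g p v := by
  rw [fderiv_fun_mul hg hh]; simp

lemma fdv_inv (hh : DifferentiableAt ℝ h p) (hz : h p ≠ 0) (v : ℝ × ℝ) :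
    fderiv ℝ (fun q => (h q)⁻¹) p v = -(fderiv ℝ h p v) / h p ^ 2 := by
  have H := (hasDerivAt_inv hz).comp_hasFDerivAt p hh.hasFDerivAt
  have e : fderiv ℝ (fun q => (h q)⁻¹) p = fderiv ℝ ((fun y : ℝ => y⁻¹) ∘ h) p := rfl
  rw [e, H.fderiv]
  simp [div_eq_mul_inv]
  ring

lemma fdv_div (hg : DifferentiableAt ℝ g p) (hh : DifferentiableAt ℝ h p) (hz : h p ≠ 0)
    (v : ℝ × ℝ) :
    fderiv ℝ (fun q => g q / h q) p v
      = (fderiv ℝ g p v * h p - g p * fderiv ℝ h p v) / h p ^ 2 := by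
  have e : (fun q => g q / h q) = fun q => g q * (h q)⁻¹ := by
    funext q; rw [div_eq_mul_inv]
  rw [e, fdv_mul hg (hh.fun_inv hz), fdv_inv hh hz]
  field_simp
  ring

lemma fdv_sq (hg : DifferentiableAt ℝ g p) (v : ℝ × ℝ) :
    fderiv ℝ (fun q => g q ^ 2) p v = 2 * g p * fderiv ℝ g p v := by
  have e : (fun q => g q ^ 2) = fun q => g q * g q := by funext q; ring
  rw [e, fdv_mul hg hg]; ring

lemma fdv_sqrt (hg : DifferentiableAt ℝ g p) (hz : g p ≠ 0) (v : ℝ × ℝ) :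
    fderiv ℝ (fun q => Real.sqrt (g q)) p v = fderiv ℝ g p v / (2 * Real.sqrt (g p)) := by
  have H := (Real.hasDerivAt_sqrt hz).comp_hasFDerivAt p hg.hasFDerivAt
  have H2 : HasFDerivAt (fun q => Real.sqrt (g q))
      ((1 / (2 * Real.sqrt (g p))) • fderiv ℝ g p) p := H
  rw [H2.fderiv]
  simp [div_eq_mul_inv]
  ring

lemma fdv_fst (v : ℝ × ℝ) : fderiv ℝ (fun q : ℝ × ℝ => q.1) p v = v.1 := by
  rw [show (fun q : ℝ × ℝ => q.1) = Prod.fst from rfl, fderiv_fst]; rfl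

lemma fdv_snd (v : ℝ × ℝ) : fderiv ℝ (fun q : ℝ × ℝ => q.2) p v = v.2 := by
  rw [show (fun q : ℝ × ℝ => q.2) = Prod.snd from rfl, fderiv_snd]; rfl

lemma fdv_div_const (hg : DifferentiableAt ℝ g p) (c : ℝ) (v : ℝ × ℝ) :
    fderiv ℝ (fun q => g q / c) p v = fderiv ℝ g p v / c := by
  have e : (fun q => g q / c) = fun q => g q * c⁻¹ := by funext q; rw [div_eq_mul_inv]
  rw [e, fdv_mul hg (differentiableAt_const _)]
  simp [div_eq_mul_inv, mul_comm]

lemma infle : ((⊤:ℕ∞) : WithTop ℕ∞) + 1 ≤ ((⊤:ℕ∞) : WithTop ℕ∞) := by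
  have h : ((⊤:ℕ∞) : WithTop ℕ∞) + 1 = (((⊤+1 :ℕ∞)) : WithTop ℕ∞) := by push_cast; ring
  rw [h]; exact WithTop.coe_le_coe.mpr le_top

lemma onele : (1 : WithTop ℕ∞) ≤ ((⊤:ℕ∞) : WithTop ℕ∞) := WithTop.coe_le_coe.mpr le_top

lemma twole : (2 : WithTop ℕ∞) ≤ ((⊤:ℕ∞) : WithTop ℕ∞) := WithTop.coe_le_coe.mpr le_top

variable {f : ℝ × ℝ → ℝ} {D : Set (ℝ × ℝ)}

lemma pdx_contDiffOn (hD : IsOpen D) (hf : ContDiffOn ℝ (⊤:ℕ∞) f D) :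
    ContDiffOn ℝ (⊤:ℕ∞) (pdx f) D :=
  (hf.fderiv_of_isOpen hD infle).clm_apply contDiffOn_const

lemma pdy_contDiffOn (hD : IsOpen D) (hf : ContDiffOn ℝ (⊤:ℕ∞) f D) :
    ContDiffOn ℝ (⊤:ℕ∞) (pdy f) D :=
  (hf.fderiv_of_isOpen hD infle).clm_apply contDiffOn_const

lemma dAt (hf : ContDiffOn ℝ (⊤:ℕ∞) f D) (hD : IsOpen D) {p : ℝ × ℝ} (hp : p ∈ D) :
    DifferentiableAt ℝ f p :=
  (hf.contDiffAt (hD.mem_nhds hp)).differentiableAt (ne_of_gt (lt_of_lt_of_le zero_lt_one onele))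

lemma pd_symm (hD : IsOpen D) (hf : ContDiffOn ℝ (⊤:ℕ∞) f D) {p : ℝ × ℝ} (hp : p ∈ D) :
    pdy (pdx f) p = pdx (pdy f) p := by
  have hat : ContDiffAt ℝ (⊤:ℕ∞) f p := hf.contDiffAt (hD.mem_nhds hp)
  have hsym := hat.isSymmSndFDerivAt (by rw [minSmoothness_of_isRCLikeNormedField]; exact twole)
  have hdf : DifferentiableAt ℝ (fderiv ℝ f) p :=
    ((hf.fderiv_of_isOpen hD infle).contDiffAt (hD.mem_nhds hp)).differentiableAt (ne_of_gt (lt_of_lt_of_le zero_lt_one onele))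
  have e1 : ∀ v w : ℝ × ℝ,
      fderiv ℝ (fun q => fderiv ℝ f q v) p w = fderiv ℝ (fderiv ℝ f) p w v := by
    intro v w
    rw [fderiv_clm_apply hdf (differentiableAt_const v)]
    simp
  show fderiv ℝ (fun q => fderiv ℝ f q (1,0)) p (0,1)
      = fderiv ℝ (fun q => fderiv ℝ f q (0,1)) p (1,0)
  rw [e1, e1]
  exact hsym (0,1) (1,0)

/-- `S = 1 + P² + Q² = W²`. -/
def Sv (f : ℝ × ℝ → ℝ) (p : ℝ × ℝ) : ℝ := 1 + Pf f p ^ 2 + Qf f p ^ 2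

/-- `K = G r - 2 F s + E t = 2 H W³`. -/
def Kv (f : ℝ × ℝ → ℝ) (p : ℝ × ℝ) : ℝ :=
  (1 + Qf f p ^ 2) * pdx (pdx f) p - 2 * (Pf f p * Qf f p) * pdx (pdy f) p
    + (1 + Pf f p ^ 2) * pdy (pdy f) p

set_option maxHeartbeats 2000000 in
lemma laps_eq (hD : IsOpen D) (hf : ContDiffOn ℝ (⊤:ℕ∞) f D) {p : ℝ × ℝ} (hp : p ∈ D) :
    lapS f (fun q => q.1) p = (Pf f p * Kv f p + Qf f p * Sv f p) / Sv f p ^ 2 ∧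
    lapS f (fun q => q.2) p = (Qf f p * Kv f p - Pf f p * Sv f p) / Sv f p ^ 2 ∧
    lapS f f p = -(Kv f p) / Sv f p ^ 2
      - p.2 / 2 * ((Pf f p * Kv f p + Qf f p * Sv f p) / Sv f p ^ 2)
      + p.1 / 2 * ((Qf f p * Kv f p - Pf f p * Sv f p) / Sv f p ^ 2) := by
  have hmem := hD.mem_nhds hp
  -- differentiability
  have dpx : DifferentiableAt ℝ (pdx f) p := dAt (pdx_contDiffOn hD hf) hD hp
  have dpy : DifferentiableAt ℝ (pdy f) p := dAt (pdy_contDiffOn hD hf) hD hp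
  have dh1 : DifferentiableAt ℝ (fun q : ℝ × ℝ => q.1 / 2) p :=
    by fun_prop
  have dh2 : DifferentiableAt ℝ (fun q : ℝ × ℝ => q.2 / 2) p :=
    by fun_prop
  have dP : DifferentiableAt ℝ (Pf f) p := dpx.add dh2
  have dQ : DifferentiableAt ℝ (Qf f) p := dpy.sub dh1
  have dE : DifferentiableAt ℝ (Ef f) p := (differentiableAt_const 1).add (dP.pow 2)
  have dF : DifferentiableAt ℝ (Ff f) p := dP.mul dQ
  have dG : DifferentiableAt ℝ (Gf f) p := (differentiableAt_const 1).add (dQ.pow 2)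
  have dS : DifferentiableAt ℝ (fun q => 1 + Pf f q ^ 2 + Qf f q ^ 2) p :=
    ((differentiableAt_const 1).add (dP.pow 2)).add (dQ.pow 2)
  have hSpos : 0 < 1 + Pf f p ^ 2 + Qf f p ^ 2 := by positivity
  have hSne : (1 + Pf f p ^ 2 + Qf f p ^ 2) ≠ 0 := ne_of_gt hSpos
  have dW : DifferentiableAt ℝ (Wf f) p := dS.sqrt hSne
  have hwpos : 0 < Wf f p := Real.sqrt_pos.mpr hSpos
  have hwne : Wf f p ≠ 0 := ne_of_gt hwpos
  have hw2 : Wf f p ^ 2 = Sv f p := Real.sq_sqrt (le_of_lt hSpos)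
  -- first derivative values
  have hr : fderiv ℝ (pdx f) p (1,0) = pdx (pdx f) p := rfl
  have hs1 : fderiv ℝ (pdy f) p (1,0) = pdx (pdy f) p := rfl
  have hs2 : fderiv ℝ (pdx f) p (0,1) = pdx (pdy f) p := pd_symm hD hf hp
  have ht : fderiv ℝ (pdy f) p (0,1) = pdy (pdy f) p := rfl
  have hPd : ∀ v : ℝ × ℝ, fderiv ℝ (Pf f) p v = fderiv ℝ (pdx f) p v + v.2 / 2 := by
    intro v
    show fderiv ℝ (fun q => pdx f q + q.2 / 2) p v = _
    rw [fdv_add dpx dh2, fdv_div_const differentiableAt_snd 2, fdv_snd]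
  have hQd : ∀ v : ℝ × ℝ, fderiv ℝ (Qf f) p v = fderiv ℝ (pdy f) p v - v.1 / 2 := by
    intro v
    show fderiv ℝ (fun q => pdy f q - q.1 / 2) p v = _
    rw [fdv_sub dpy dh1, fdv_div_const differentiableAt_fst 2, fdv_fst]
  have hPx : fderiv ℝ (Pf f) p (1,0) = pdx (pdx f) p := by
    rw [hPd, hr]; norm_num
  have hPy : fderiv ℝ (Pf f) p (0,1) = pdx (pdy f) p + 1/2 := by
    rw [hPd, hs2]
  have hQx : fderiv ℝ (Qf f) p (1,0) = pdx (pdy f) p - 1/2 := by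
    rw [hQd, hs1]
  have hQy : fderiv ℝ (Qf f) p (0,1) = pdy (pdy f) p := by
    rw [hQd, ht]; norm_num
  -- E, F, G, W derivatives
  have hEd : ∀ v : ℝ × ℝ, fderiv ℝ (Ef f) p v = 2 * Pf f p * fderiv ℝ (Pf f) p v := by
    intro v
    show fderiv ℝ (fun q => 1 + Pf f q ^ 2) p v = _
    rw [fdv_add (differentiableAt_const 1) (dP.fun_pow 2), fdv_sq dP, fderiv_fun_const]
    simp
  have hGd : ∀ v : ℝ × ℝ, fderiv ℝ (Gf f) p v = 2 * Qf f p * fderiv ℝ (Qf f) p v := by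
    intro v
    show fderiv ℝ (fun q => 1 + Qf f q ^ 2) p v = _
    rw [fdv_add (differentiableAt_const 1) (dQ.fun_pow 2), fdv_sq dQ, fderiv_fun_const]
    simp
  have hFd : ∀ v : ℝ × ℝ, fderiv ℝ (Ff f) p v
      = Pf f p * fderiv ℝ (Qf f) p v + Qf f p * fderiv ℝ (Pf f) p v := by
    intro v
    show fderiv ℝ (fun q => Pf f q * Qf f q) p v = _
    rw [fdv_mul dP dQ]
  have hWd : ∀ v : ℝ × ℝ, fderiv ℝ (Wf f) p v
      = (2 * Pf f p * fderiv ℝ (Pf f) p v + 2 * Qf f p * fderiv ℝ (Qf f) p v)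
        / (2 * Wf f p) := by
    intro v
    show fderiv ℝ (fun q => Real.sqrt (1 + Pf f q ^ 2 + Qf f q ^ 2)) p v = _
    rw [fdv_sqrt dS hSne,
      show Real.sqrt (1 + Pf f p ^ 2 + Qf f p ^ 2) = Wf f p from rfl,
      fdv_add ((differentiableAt_const 1).fun_add (dP.fun_pow 2)) (dQ.fun_pow 2),
      fdv_add (differentiableAt_const 1) (dP.fun_pow 2), fdv_sq dP, fdv_sq dQ, fderiv_fun_const]
    simp
  have hGx : fderiv ℝ (Gf f) p (1,0) = 2 * Qf f p * (pdx (pdy f) p - 1/2) := by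
    rw [hGd, hQx]
  have hEy : fderiv ℝ (Ef f) p (0,1) = 2 * Pf f p * (pdx (pdy f) p + 1/2) := by
    rw [hEd, hPy]
  have hFx : fderiv ℝ (Ff f) p (1,0)
      = Pf f p * (pdx (pdy f) p - 1/2) + Qf f p * pdx (pdx f) p := by
    rw [hFd, hQx, hPx]
  have hFy : fderiv ℝ (Ff f) p (0,1)
      = Pf f p * pdy (pdy f) p + Qf f p * (pdx (pdy f) p + 1/2) := by
    rw [hFd, hQy, hPy]
  have hWx : fderiv ℝ (Wf f) p (1,0)
      = (2 * Pf f p * pdx (pdx f) p + 2 * Qf f p * (pdx (pdy f) p - 1/2))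
        / (2 * Wf f p) := by
    rw [hWd, hPx, hQx]
  have hWy : fderiv ℝ (Wf f) p (0,1)
      = (2 * Pf f p * (pdx (pdy f) p + 1/2) + 2 * Qf f p * pdy (pdy f) p)
        / (2 * Wf f p) := by
    rw [hWd, hPy, hQy]
  -- values
  have hEv : Ef f p = 1 + Pf f p ^ 2 := rfl
  have hFv : Ff f p = Pf f p * Qf f p := rfl
  have hGv : Gf f p = 1 + Qf f p ^ 2 := rfl
  have hfxv : pdx f p = Pf f p - p.2 / 2 := by
    show pdx f p = pdx f p + p.2/2 - p.2/2; ring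
  have hfyv : pdy f p = Qf f p + p.1 / 2 := by
    show pdy f p = pdy f p - p.1/2 + p.1/2; ring
  -- coordinate partials
  have pdx1 : ∀ q : ℝ × ℝ, pdx (fun q' : ℝ × ℝ => q'.1) q = 1 := by
    intro q; show fderiv ℝ (fun q' : ℝ × ℝ => q'.1) q (1,0) = 1; rw [fdv_fst]
  have pdy1 : ∀ q : ℝ × ℝ, pdy (fun q' : ℝ × ℝ => q'.1) q = 0 := by
    intro q; show fderiv ℝ (fun q' : ℝ × ℝ => q'.1) q (0,1) = 0; rw [fdv_fst]
  have pdx2 : ∀ q : ℝ × ℝ, pdx (fun q' : ℝ × ℝ => q'.2) q = 0 := by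
    intro q; show fderiv ℝ (fun q' : ℝ × ℝ => q'.2) q (1,0) = 0; rw [fdv_snd]
  have pdy2 : ∀ q : ℝ × ℝ, pdy (fun q' : ℝ × ℝ => q'.2) q = 1 := by
    intro q; show fderiv ℝ (fun q' : ℝ × ℝ => q'.2) q (0,1) = 1; rw [fdv_snd]
  refine ⟨?_, ?_, ?_⟩
  · -- lap x
    have e1 : (fun q => (Gf f q * pdx (fun q' : ℝ × ℝ => q'.1) q
          - Ff f q * pdy (fun q' : ℝ × ℝ => q'.1) q) / Wf f q)
        = fun q => Gf f q / Wf f q := by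
      funext q; rw [pdx1, pdy1]; ring
    have e2 : (fun q => (-(Ff f q) * pdx (fun q' : ℝ × ℝ => q'.1) q
          + Ef f q * pdy (fun q' : ℝ × ℝ => q'.1) q) / Wf f q)
        = fun q => -(Ff f q) / Wf f q := by
      funext q; rw [pdx1, pdy1]; ring
    have hA : pdx (fun q => Gf f q / Wf f q) p
        = (2 * Qf f p * (pdx (pdy f) p - 1/2) * Wf f p
            - (1 + Qf f p ^ 2) * ((2 * Pf f p * pdx (pdx f) p
              + 2 * Qf f p * (pdx (pdy f) p - 1/2)) / (2 * Wf f p))) / Wf f p ^ 2 := by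
      show fderiv ℝ (fun q => Gf f q / Wf f q) p (1,0) = _
      rw [fdv_div dG dW hwne, hGx, hWx, hGv]
    have hB : pdy (fun q => -(Ff f q) / Wf f q) p
        = (-(Pf f p * pdy (pdy f) p + Qf f p * (pdx (pdy f) p + 1/2)) * Wf f p
            - -(Pf f p * Qf f p) * ((2 * Pf f p * (pdx (pdy f) p + 1/2)
              + 2 * Qf f p * pdy (pdy f) p) / (2 * Wf f p))) / Wf f p ^ 2 := by
      show fderiv ℝ (fun q => -(Ff f q) / Wf f q) p (0,1) = _
      rw [fdv_div dF.fun_neg dW hwne, fdv_neg, hFy, hWy]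
      show (_ - -(Ff f p) * _) / _ = _
      rw [hFv]
    show -(1 / Wf f p) * (pdx (fun q => (Gf f q * pdx (fun q' : ℝ × ℝ => q'.1) q
          - Ff f q * pdy (fun q' : ℝ × ℝ => q'.1) q) / Wf f q) p
        + pdy (fun q => (-(Ff f q) * pdx (fun q' : ℝ × ℝ => q'.1) q
          + Ef f q * pdy (fun q' : ℝ × ℝ => q'.1) q) / Wf f q) p) = _
    rw [e1, e2, hA, hB]
    have mid : -(1 / Wf f p) * ((2 * Qf f p * (pdx (pdy f) p - 1/2) * Wf f p
            - (1 + Qf f p ^ 2) * ((2 * Pf f p * pdx (pdx f) p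
              + 2 * Qf f p * (pdx (pdy f) p - 1/2)) / (2 * Wf f p))) / Wf f p ^ 2
        + (-(Pf f p * pdy (pdy f) p + Qf f p * (pdx (pdy f) p + 1/2)) * Wf f p
            - -(Pf f p * Qf f p) * ((2 * Pf f p * (pdx (pdy f) p + 1/2)
              + 2 * Qf f p * pdy (pdy f) p) / (2 * Wf f p))) / Wf f p ^ 2)
        = -(((2 * Qf f p * (pdx (pdy f) p - 1/2)
              + -(Pf f p * pdy (pdy f) p + Qf f p * (pdx (pdy f) p + 1/2))) * Wf f p ^ 2
            - ((1 + Qf f p ^ 2) * (Pf f p * pdx (pdx f) p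
                + Qf f p * (pdx (pdy f) p - 1/2))
              + -(Pf f p * Qf f p) * (Pf f p * (pdx (pdy f) p + 1/2)
                + Qf f p * pdy (pdy f) p)))) / (Wf f p ^ 2) ^ 2 := by
      field_simp
      ring
    rw [mid, hw2]
    simp only [Sv, Kv]
    field_simp
    ring
  · -- lap y
    have e1 : (fun q => (Gf f q * pdx (fun q' : ℝ × ℝ => q'.2) q
          - Ff f q * pdy (fun q' : ℝ × ℝ => q'.2) q) / Wf f q)
        = fun q => -(Ff f q) / Wf f q := by
      funext q; rw [pdx2, pdy2]; ring
    have e2 : (fun q => (-(Ff f q) * pdx (fun q' : ℝ × ℝ => q'.2) q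
          + Ef f q * pdy (fun q' : ℝ × ℝ => q'.2) q) / Wf f q)
        = fun q => Ef f q / Wf f q := by
      funext q; rw [pdx2, pdy2]; ring
    have hA : pdx (fun q => -(Ff f q) / Wf f q) p
        = (-(Pf f p * (pdx (pdy f) p - 1/2) + Qf f p * pdx (pdx f) p) * Wf f p
            - -(Pf f p * Qf f p) * ((2 * Pf f p * pdx (pdx f) p
              + 2 * Qf f p * (pdx (pdy f) p - 1/2)) / (2 * Wf f p))) / Wf f p ^ 2 := by
      show fderiv ℝ (fun q => -(Ff f q) / Wf f q) p (1,0) = _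
      rw [fdv_div dF.fun_neg dW hwne, fdv_neg, hFx, hWx]
      show (_ - -(Ff f p) * _) / _ = _
      rw [hFv]
    have hB : pdy (fun q => Ef f q / Wf f q) p
        = (2 * Pf f p * (pdx (pdy f) p + 1/2) * Wf f p
            - (1 + Pf f p ^ 2) * ((2 * Pf f p * (pdx (pdy f) p + 1/2)
              + 2 * Qf f p * pdy (pdy f) p) / (2 * Wf f p))) / Wf f p ^ 2 := by
      show fderiv ℝ (fun q => Ef f q / Wf f q) p (0,1) = _
      rw [fdv_div dE dW hwne, hEy, hWy, hEv]
    show -(1 / Wf f p) * (pdx (fun q => (Gf f q * pdx (fun q' : ℝ × ℝ => q'.2) q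
          - Ff f q * pdy (fun q' : ℝ × ℝ => q'.2) q) / Wf f q) p
        + pdy (fun q => (-(Ff f q) * pdx (fun q' : ℝ × ℝ => q'.2) q
          + Ef f q * pdy (fun q' : ℝ × ℝ => q'.2) q) / Wf f q) p) = _
    rw [e1, e2, hA, hB]
    have mid : -(1 / Wf f p) * ((-(Pf f p * (pdx (pdy f) p - 1/2) + Qf f p * pdx (pdx f) p) * Wf f p
            - -(Pf f p * Qf f p) * ((2 * Pf f p * pdx (pdx f) p
              + 2 * Qf f p * (pdx (pdy f) p - 1/2)) / (2 * Wf f p))) / Wf f p ^ 2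
        + (2 * Pf f p * (pdx (pdy f) p + 1/2) * Wf f p
            - (1 + Pf f p ^ 2) * ((2 * Pf f p * (pdx (pdy f) p + 1/2)
              + 2 * Qf f p * pdy (pdy f) p) / (2 * Wf f p))) / Wf f p ^ 2)
        = -(((-(Pf f p * (pdx (pdy f) p - 1/2) + Qf f p * pdx (pdx f) p)
              + 2 * Pf f p * (pdx (pdy f) p + 1/2)) * Wf f p ^ 2
            - (-(Pf f p * Qf f p) * (Pf f p * pdx (pdx f) p
                + Qf f p * (pdx (pdy f) p - 1/2))
              + (1 + Pf f p ^ 2) * (Pf f p * (pdx (pdy f) p + 1/2)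
                + Qf f p * pdy (pdy f) p)))) / (Wf f p ^ 2) ^ 2 := by
      field_simp
      ring
    rw [mid, hw2]
    simp only [Sv, Kv]
    field_simp
    ring
  · -- lap f
    have dnum1 : DifferentiableAt ℝ (fun q => Gf f q * pdx f q - Ff f q * pdy f q) p :=
      (dG.mul dpx).sub (dF.mul dpy)
    have dnum2 : DifferentiableAt ℝ (fun q => -(Ff f q) * pdx f q + Ef f q * pdy f q) p :=
      (dF.neg.mul dpx).add (dE.mul dpy)
    have hA : pdx (fun q => (Gf f q * pdx f q - Ff f q * pdy f q) / Wf f q) p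
        = (((1 + Qf f p ^ 2) * pdx (pdx f) p
              + (Pf f p - p.2/2) * (2 * Qf f p * (pdx (pdy f) p - 1/2))
            - (Pf f p * Qf f p * pdx (pdy f) p
              + (Qf f p + p.1/2) * (Pf f p * (pdx (pdy f) p - 1/2)
                + Qf f p * pdx (pdx f) p))) * Wf f p
          - ((1 + Qf f p ^ 2) * (Pf f p - p.2/2)
              - Pf f p * Qf f p * (Qf f p + p.1/2))
            * ((2 * Pf f p * pdx (pdx f) p
              + 2 * Qf f p * (pdx (pdy f) p - 1/2)) / (2 * Wf f p))) / Wf f p ^ 2 := by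
      show fderiv ℝ (fun q => (Gf f q * pdx f q - Ff f q * pdy f q) / Wf f q) p (1,0) = _
      rw [fdv_div dnum1 dW hwne, fdv_sub (dG.fun_mul dpx) (dF.fun_mul dpy),
        fdv_mul dG dpx, fdv_mul dF dpy, hr, hs1, hGx, hFx, hWx]
      show ((Gf f p * _ + _ * _ - (Ff f p * _ + _ * _)) * _
          - (Gf f p * pdx f p - Ff f p * pdy f p) * _) / _ = _
      rw [hGv, hFv, hfxv, hfyv]
    have hB : pdy (fun q => (-(Ff f q) * pdx f q + Ef f q * pdy f q) / Wf f q) p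
        = ((-(Pf f p * Qf f p) * pdx (pdy f) p
              + (Pf f p - p.2/2) * (-(Pf f p * pdy (pdy f) p
                + Qf f p * (pdx (pdy f) p + 1/2)))
            + ((1 + Pf f p ^ 2) * pdy (pdy f) p
              + (Qf f p + p.1/2) * (2 * Pf f p * (pdx (pdy f) p + 1/2)))) * Wf f p
          - (-(Pf f p * Qf f p) * (Pf f p - p.2/2)
              + (1 + Pf f p ^ 2) * (Qf f p + p.1/2))
            * ((2 * Pf f p * (pdx (pdy f) p + 1/2)
              + 2 * Qf f p * pdy (pdy f) p) / (2 * Wf f p))) / Wf f p ^ 2 := by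
      show fderiv ℝ (fun q => (-(Ff f q) * pdx f q + Ef f q * pdy f q) / Wf f q) p (0,1) = _
      rw [fdv_div dnum2 dW hwne, fdv_add (dF.fun_neg.fun_mul dpx) (dE.fun_mul dpy),
        fdv_mul dF.fun_neg dpx, fdv_mul dE dpy, fdv_neg, hs2, ht, hFy, hEy, hWy]
      show ((-(Ff f p) * _ + _ * _ + (Ef f p * _ + _ * _)) * _
          - (-(Ff f p) * pdx f p + Ef f p * pdy f p) * _) / _ = _
      rw [hEv, hFv, hfxv, hfyv]
    show -(1 / Wf f p) * (pdx (fun q => (Gf f q * pdx f q - Ff f q * pdy f q) / Wf f q) p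
        + pdy (fun q => (-(Ff f q) * pdx f q + Ef f q * pdy f q) / Wf f q) p) = _
    rw [hA, hB]
    have mid : -(1 / Wf f p) * ((((1 + Qf f p ^ 2) * pdx (pdx f) p
              + (Pf f p - p.2/2) * (2 * Qf f p * (pdx (pdy f) p - 1/2))
            - (Pf f p * Qf f p * pdx (pdy f) p
              + (Qf f p + p.1/2) * (Pf f p * (pdx (pdy f) p - 1/2)
                + Qf f p * pdx (pdx f) p))) * Wf f p
          - ((1 + Qf f p ^ 2) * (Pf f p - p.2/2)
              - Pf f p * Qf f p * (Qf f p + p.1/2))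
            * ((2 * Pf f p * pdx (pdx f) p
              + 2 * Qf f p * (pdx (pdy f) p - 1/2)) / (2 * Wf f p))) / Wf f p ^ 2
        + ((-(Pf f p * Qf f p) * pdx (pdy f) p
              + (Pf f p - p.2/2) * (-(Pf f p * pdy (pdy f) p
                + Qf f p * (pdx (pdy f) p + 1/2)))
            + ((1 + Pf f p ^ 2) * pdy (pdy f) p
              + (Qf f p + p.1/2) * (2 * Pf f p * (pdx (pdy f) p + 1/2)))) * Wf f p
          - (-(Pf f p * Qf f p) * (Pf f p - p.2/2)
              + (1 + Pf f p ^ 2) * (Qf f p + p.1/2))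
            * ((2 * Pf f p * (pdx (pdy f) p + 1/2)
              + 2 * Qf f p * pdy (pdy f) p) / (2 * Wf f p))) / Wf f p ^ 2)
        = -(((((1 + Qf f p ^ 2) * pdx (pdx f) p
              + (Pf f p - p.2/2) * (2 * Qf f p * (pdx (pdy f) p - 1/2))
            - (Pf f p * Qf f p * pdx (pdy f) p
              + (Qf f p + p.1/2) * (Pf f p * (pdx (pdy f) p - 1/2)
                + Qf f p * pdx (pdx f) p)))
            + (-(Pf f p * Qf f p) * pdx (pdy f) p
              + (Pf f p - p.2/2) * (-(Pf f p * pdy (pdy f) p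
                + Qf f p * (pdx (pdy f) p + 1/2)))
            + ((1 + Pf f p ^ 2) * pdy (pdy f) p
              + (Qf f p + p.1/2) * (2 * Pf f p * (pdx (pdy f) p + 1/2))))) * Wf f p ^ 2
          - (((1 + Qf f p ^ 2) * (Pf f p - p.2/2)
              - Pf f p * Qf f p * (Qf f p + p.1/2))
              * (Pf f p * pdx (pdx f) p + Qf f p * (pdx (pdy f) p - 1/2))
            + (-(Pf f p * Qf f p) * (Pf f p - p.2/2)
              + (1 + Pf f p ^ 2) * (Qf f p + p.1/2))
              * (Pf f p * (pdx (pdy f) p + 1/2) + Qf f p * pdy (pdy f) p))))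
          / (Wf f p ^ 2) ^ 2 := by
      field_simp
      ring
    rw [mid, hw2]
    simp only [Sv, Kv]
    field_simp
    ring

end FT2Aux

namespace FT2Aux

variable {f u : ℝ × ℝ → ℝ} {D : Set (ℝ × ℝ)}

lemma fdP_x (hD : IsOpen D) (hf : ContDiffOn ℝ (⊤:ℕ∞) f D) {p : ℝ × ℝ} (hp : p ∈ D) :
    fderiv ℝ (Pf f) p (1,0) = pdx (pdx f) p := by
  have dpx := dAt (pdx_contDiffOn hD hf) hD hp
  have dh2 : DifferentiableAt ℝ (fun q : ℝ × ℝ => q.2 / 2) p := by fun_prop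
  show fderiv ℝ (fun q => pdx f q + q.2 / 2) p (1,0) = _
  rw [fdv_add dpx dh2, fdv_div_const differentiableAt_snd 2, fdv_snd]
  norm_num
  rfl

lemma fdP_y (hD : IsOpen D) (hf : ContDiffOn ℝ (⊤:ℕ∞) f D) {p : ℝ × ℝ} (hp : p ∈ D) :
    fderiv ℝ (Pf f) p (0,1) = pdx (pdy f) p + 1/2 := by
  have dpx := dAt (pdx_contDiffOn hD hf) hD hp
  have dh2 : DifferentiableAt ℝ (fun q : ℝ × ℝ => q.2 / 2) p := by fun_prop
  show fderiv ℝ (fun q => pdx f q + q.2 / 2) p (0,1) = _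
  rw [fdv_add dpx dh2, fdv_div_const differentiableAt_snd 2, fdv_snd]
  rw [show fderiv ℝ (pdx f) p (0,1) = pdx (pdy f) p from pd_symm hD hf hp]

lemma fdQ_x (hD : IsOpen D) (hf : ContDiffOn ℝ (⊤:ℕ∞) f D) {p : ℝ × ℝ} (hp : p ∈ D) :
    fderiv ℝ (Qf f) p (1,0) = pdx (pdy f) p - 1/2 := by
  have dpy := dAt (pdy_contDiffOn hD hf) hD hp
  have dh1 : DifferentiableAt ℝ (fun q : ℝ × ℝ => q.1 / 2) p := by fun_prop
  show fderiv ℝ (fun q => pdy f q - q.1 / 2) p (1,0) = _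
  rw [fdv_sub dpy dh1, fdv_div_const differentiableAt_fst 2, fdv_fst]
  norm_num
  rfl

lemma fdQ_y (hD : IsOpen D) (hf : ContDiffOn ℝ (⊤:ℕ∞) f D) {p : ℝ × ℝ} (hp : p ∈ D) :
    fderiv ℝ (Qf f) p (0,1) = pdy (pdy f) p := by
  have dpy := dAt (pdy_contDiffOn hD hf) hD hp
  have dh1 : DifferentiableAt ℝ (fun q : ℝ × ℝ => q.1 / 2) p := by fun_prop
  show fderiv ℝ (fun q => pdy f q - q.1 / 2) p (0,1) = _
  rw [fdv_sub dpy dh1, fdv_div_const differentiableAt_fst 2, fdv_fst]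
  norm_num
  rfl

end FT2Aux

/-- **Second family, case `λ₁ = λ₃ = 0`, `λ₂ ≠ 0`**: under the ruled hypothesis `Q = −uP`,
`u_y + u·u_x = 0`, if `Δx = λ₁x`, `Δy = λ₂y`, `Δf = λ₃f` on `D` with `λ₁ = λ₃ = 0`, `λ₂ ≠ 0`,
and `P` nowhere zero on `D`, then `H₁ = uW`, i.e. `f_xx + f_yy = u(1 + P²(1 + u²))`, and
moreover `−P(1 + u²)/W² = λ₂y` and `2u/W² = λ₂xy` on `D`. -/
theorem finite_type_S2_case_l1_l3_zero
    (D : Set (ℝ × ℝ)) (hD : IsOpen D) (hDne : D.Nonempty)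
    (f : ℝ × ℝ → ℝ) (hf : ContDiffOn ℝ (⊤ : ℕ∞) f D)
    (u : ℝ × ℝ → ℝ) (hu : ContDiffOn ℝ (⊤ : ℕ∞) u D)
    (hruled : ∀ p ∈ D, Qf f p = -(u p) * Pf f p)
    (hburgers : ∀ p ∈ D, pdy u p + u p * pdx u p = 0)
    (l1 l2 l3 : ℝ)
    (h1 : ∀ p ∈ D, lapS f (fun q => q.1) p = l1 * p.1)
    (h2 : ∀ p ∈ D, lapS f (fun q => q.2) p = l2 * p.2)
    (h3 : ∀ p ∈ D, lapS f f p = l3 * f p)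
    (hl1 : l1 = 0) (hl3 : l3 = 0) (hl2 : l2 ≠ 0)
    (hP : ∀ p ∈ D, Pf f p ≠ 0) :
    ∀ p ∈ D,
      (H1f f p = u p * Wf f p) ∧
      (pdx (pdx f) p + pdy (pdy f) p = u p * (1 + Pf f p ^ 2 * (1 + u p ^ 2))) ∧
      (-(Pf f p * (1 + u p ^ 2)) / Wf f p ^ 2 = l2 * p.2) ∧
      (2 * u p / Wf f p ^ 2 = l2 * (p.1 * p.2)) := by
  intro p hp
  obtain ⟨la1, la2, la3⟩ := FT2Aux.laps_eq hD hf hp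
  have hSpos : 0 < 1 + Pf f p ^ 2 + Qf f p ^ 2 := by positivity
  have hSne : (1 + Pf f p ^ 2 + Qf f p ^ 2) ≠ 0 := ne_of_gt hSpos
  have hSvne : FT2Aux.Sv f p ≠ 0 := hSne
  have hwpos : 0 < Wf f p := Real.sqrt_pos.mpr hSpos
  have hwne : Wf f p ≠ 0 := ne_of_gt hwpos
  have hw2 : Wf f p ^ 2 = 1 + Pf f p ^ 2 + Qf f p ^ 2 := Real.sq_sqrt (le_of_lt hSpos)
  have hQp : Qf f p = -(u p) * Pf f p := hruled p hp
  have hA : (Pf f p * FT2Aux.Kv f p + Qf f p * FT2Aux.Sv f p) / FT2Aux.Sv f p ^ 2 = 0 := by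
    rw [← la1, h1 p hp, hl1, zero_mul]
  have hB : (Qf f p * FT2Aux.Kv f p - Pf f p * FT2Aux.Sv f p) / FT2Aux.Sv f p ^ 2
      = l2 * p.2 := by rw [← la2, h2 p hp]
  have hC : -(FT2Aux.Kv f p) / FT2Aux.Sv f p ^ 2
      - p.2 / 2 * ((Pf f p * FT2Aux.Kv f p + Qf f p * FT2Aux.Sv f p) / FT2Aux.Sv f p ^ 2)
      + p.1 / 2 * ((Qf f p * FT2Aux.Kv f p - Pf f p * FT2Aux.Sv f p) / FT2Aux.Sv f p ^ 2)
      = 0 := by rw [← la3, h3 p hp, hl3, zero_mul]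
  have hSne2 : FT2Aux.Sv f p ^ 2 ≠ 0 := pow_ne_zero 2 hSvne
  have hA' : Pf f p * FT2Aux.Kv f p + Qf f p * FT2Aux.Sv f p = 0 :=
    (div_eq_zero_iff.mp hA).resolve_right hSne2
  have hPKS : Pf f p * (FT2Aux.Kv f p - u p * FT2Aux.Sv f p) = 0 := by
    linear_combination hA' - FT2Aux.Sv f p * hQp
  have hK : FT2Aux.Kv f p = u p * FT2Aux.Sv f p := by
    rcases mul_eq_zero.mp hPKS with h | h
    · exact absurd h (hP p hp)
    · linarith
  -- derivatives of the ruled relation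
  have du : DifferentiableAt ℝ u p := FT2Aux.dAt hu hD hp
  have dpx := FT2Aux.dAt (FT2Aux.pdx_contDiffOn hD hf) hD hp
  have dpy := FT2Aux.dAt (FT2Aux.pdy_contDiffOn hD hf) hD hp
  have dh1 : DifferentiableAt ℝ (fun q : ℝ × ℝ => q.1 / 2) p := by fun_prop
  have dh2 : DifferentiableAt ℝ (fun q : ℝ × ℝ => q.2 / 2) p := by fun_prop
  have dP : DifferentiableAt ℝ (Pf f) p := dpx.add dh2
  have dQ : DifferentiableAt ℝ (Qf f) p := dpy.sub dh1
  have hg0 : (fun q => Qf f q + u q * Pf f q) =ᶠ[nhds p] (fun _ => (0:ℝ)) := by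
    filter_upwards [hD.mem_nhds hp] with q hq
    have h := hruled q hq
    simp only [h]; ring
  have hgd : fderiv ℝ (fun q => Qf f q + u q * Pf f q) p = 0 := by
    rw [hg0.fderiv_eq]; exact fderiv_const_apply 0
  have hgx : fderiv ℝ (fun q => Qf f q + u q * Pf f q) p (1,0) = 0 := by
    rw [hgd]; rfl
  have hgy : fderiv ℝ (fun q => Qf f q + u q * Pf f q) p (0,1) = 0 := by
    rw [hgd]; rfl
  rw [FT2Aux.fdv_add dQ (du.fun_mul dP) (1,0), FT2Aux.fdv_mul du dP (1,0),
    FT2Aux.fdQ_x hD hf hp, FT2Aux.fdP_x hD hf hp,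
    show fderiv ℝ u p (1,0) = pdx u p from rfl] at hgx
  rw [FT2Aux.fdv_add dQ (du.fun_mul dP) (0,1), FT2Aux.fdv_mul du dP (0,1),
    FT2Aux.fdQ_y hD hf hp, FT2Aux.fdP_y hD hf hp,
    show fderiv ℝ u p (0,1) = pdy u p from rfl] at hgy
  have hbur := hburgers p hp
  have hT : u p ^ 2 * pdx (pdx f) p + 2 * u p * pdx (pdy f) p + pdy (pdy f) p = 0 := by
    linear_combination u p * hgx + hgy - Pf f p * hbur
  have hrt : pdx (pdx f) p + pdy (pdy f) p = u p * FT2Aux.Sv f p := by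
    simp only [FT2Aux.Sv, FT2Aux.Kv] at hK ⊢
    linear_combination hK - Pf f p ^ 2 * hT
      + ((Pf f p * u p - Qf f p) * pdx (pdx f) p + 2 * Pf f p * pdx (pdy f) p) * hQp
  have c2 : pdx (pdx f) p + pdy (pdy f) p = u p * (1 + Pf f p ^ 2 * (1 + u p ^ 2)) := by
    simp only [FT2Aux.Sv] at hrt
    linear_combination hrt + (u p * (Qf f p - u p * Pf f p)) * hQp
  have hwu : Wf f p ^ 2 = 1 + Pf f p ^ 2 * (1 + u p ^ 2) := by
    rw [hw2]; linear_combination (Qf f p - u p * Pf f p) * hQp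
  refine ⟨?_, c2, ?_, ?_⟩
  · show (pdx (pdx f) p + pdy (pdy f) p) / Wf f p = u p * Wf f p
    rw [c2, ← hwu]
    field_simp
  · have e : -(Pf f p * (1 + u p ^ 2)) / Wf f p ^ 2
        = (Qf f p * FT2Aux.Kv f p - Pf f p * FT2Aux.Sv f p) / FT2Aux.Sv f p ^ 2 := by
      rw [hw2, hK]
      simp only [FT2Aux.Sv]
      rw [hQp]
      have hne' : (1 + Pf f p ^ 2 + (-(u p) * Pf f p) ^ 2) ≠ 0 := by positivity
      field_simp
      ring
    rw [e]; exact hB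
  · rw [hA, hB, hK] at hC
    have hid : -(u p * FT2Aux.Sv f p) / FT2Aux.Sv f p ^ 2 = -(u p) / FT2Aux.Sv f p := by
      field_simp
    rw [hid] at hC
    rw [hw2, show (1 + Pf f p ^ 2 + Qf f p ^ 2) = FT2Aux.Sv f p from rfl]
    linear_combination (-2) * hC
end
end
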